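/- Let M be a closed 2-connected manifold (path-connected with trivial fundamental group and trivial second homotopy group) and let f : M → M be a fixed-point-free continuous involution. Then the twisted path space P_f M is simply connected (in particular path-connected with trivial fundamental group). -/

import Mathlib

open unitInterval

noncomputable section
namespace StmtAux
open Real Set

/-! ### Generic topology helpers -/

theorem continuous_of_closed_cover {X Y : Type*} [TopologicalSpace X] [TopologicalSpace Y]
    {ι : Type*} [Finite ι] {s : ι → Set X} {f : X → Y} (hc : ∀ i, IsClosed (s i))
    (hcov : ∀ x, ∃ i, x ∈ s i) (hf : ∀ i, ContinuousOn f (s i)) : Continuous f := by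
  rw [continuous_iff_isClosed]
  intro C hC
  have h : f ⁻¹' C = ⋃ i, s i ∩ f ⁻¹' C := by
    ext x
    simp only [Set.mem_iUnion, Set.mem_inter_iff, Set.mem_preimage]
    exact ⟨fun hx => (hcov x).imp fun i hi => ⟨hi, hx⟩, fun ⟨i, _, hx⟩ => hx⟩
  rw [h]
  exact isClosed_iUnion_of_finite fun i => (hf i).preimage_isClosed_of_isClosed (hc i) hC

theorem descend {X Y Z : Type*} [TopologicalSpace X] [TopologicalSpace Y] [TopologicalSpace Z]
    [CompactSpace X] [T2Space Y] {Q : X → Y} (hQc : Continuous Q)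
    (hQs : Function.Surjective Q) {K : X → Z} (hKc : Continuous K)
    (hfib : ∀ a b, Q a = Q b → K a = K b) :
    ∃ E : Y → Z, Continuous E ∧ ∀ a, E (Q a) = K a := by
  have hq := (hQc.isClosedMap).isQuotientMap hQc hQs
  refine ⟨fun y => K (Function.surjInv hQs y), ?_, fun a => hfib _ _ (Function.surjInv_eq hQs _)⟩
  rw [hq.continuous_iff]
  have h : ((fun y => K (Function.surjInv hQs y)) ∘ Q) = K :=
    funext fun a => hfib _ _ (Function.surjInv_eq hQs _)
  rw [h]; exact hKc

/-! ### unit interval helpers -/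

lemma I_eq_zero_iff {x : I} : x = 0 ↔ (x : ℝ) = 0 :=
  ⟨fun h => by rw [h]; rfl, fun h => Subtype.ext h⟩

lemma I_eq_one_iff {x : I} : x = 1 ↔ (x : ℝ) = 1 :=
  ⟨fun h => by rw [h]; rfl, fun h => Subtype.ext h⟩

lemma I_bounds (x : I) : 0 ≤ (x : ℝ) ∧ (x : ℝ) ≤ 1 := ⟨x.2.1, x.2.2⟩

/-! ### square coordinates -/

def aa (z : I × I) : ℝ := (z.1 : ℝ) - 1/2
def bb (z : I × I) : ℝ := (z.2 : ℝ) - 1/2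

lemma cont_aa : Continuous aa := by
  unfold aa; fun_prop

lemma cont_bb : Continuous bb := by
  unfold bb; fun_prop

lemma abs_aa_le (z : I × I) : |aa z| ≤ 1/2 := by
  have h := I_bounds z.1; rw [abs_le]; unfold aa; constructor <;> linarith [h.1, h.2]

lemma abs_bb_le (z : I × I) : |bb z| ≤ 1/2 := by
  have h := I_bounds z.2; rw [abs_le]; unfold bb; constructor <;> linarith [h.1, h.2]

/-- boundary of the square -/
def S2 : Set (I × I) := {z | z.1 = 0 ∨ z.1 = 1 ∨ z.2 = 0 ∨ z.2 = 1}

lemma S2_iff {z : I × I} : z ∈ S2 ↔ max |aa z| |bb z| = 1/2 := by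
  constructor
  · intro h
    apply le_antisymm (max_le (abs_aa_le z) (abs_bb_le z))
    rcases h with h | h | h | h
    · have h2 : |aa z| = 1/2 := by
        unfold aa; rw [I_eq_zero_iff.1 h, show (0:ℝ) - 1/2 = -(1/2) by norm_num, abs_neg,
          abs_of_nonneg (by norm_num : (0:ℝ) ≤ 1/2)]
      rw [← h2]; exact le_max_left _ _
    · have h2 : |aa z| = 1/2 := by
        unfold aa; rw [I_eq_one_iff.1 h, show (1:ℝ) - 1/2 = 1/2 by norm_num,
          abs_of_nonneg (by norm_num : (0:ℝ) ≤ 1/2)]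
      rw [← h2]; exact le_max_left _ _
    · have h2 : |bb z| = 1/2 := by
        unfold bb; rw [I_eq_zero_iff.1 h, show (0:ℝ) - 1/2 = -(1/2) by norm_num, abs_neg,
          abs_of_nonneg (by norm_num : (0:ℝ) ≤ 1/2)]
      rw [← h2]; exact le_max_right _ _
    · have h2 : |bb z| = 1/2 := by
        unfold bb; rw [I_eq_one_iff.1 h, show (1:ℝ) - 1/2 = 1/2 by norm_num,
          abs_of_nonneg (by norm_num : (0:ℝ) ≤ 1/2)]
      rw [← h2]; exact le_max_right _ _
  · intro h
    rcases le_total |bb z| |aa z| with h' | h'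
    · rw [max_eq_left h'] at h
      rcases (abs_eq (by norm_num : (0:ℝ) ≤ 1/2)).1 h with h'' | h''
      · exact Or.inr (Or.inl (I_eq_one_iff.2 (by unfold aa at h''; linarith)))
      · exact Or.inl (I_eq_zero_iff.2 (by unfold aa at h''; linarith))
    · rw [max_eq_right h'] at h
      rcases (abs_eq (by norm_num : (0:ℝ) ≤ 1/2)).1 h with h'' | h''
      · exact Or.inr (Or.inr (Or.inr (I_eq_one_iff.2 (by unfold bb at h''; linarith))))
      · exact Or.inr (Or.inr (Or.inl (I_eq_zero_iff.2 (by unfold bb at h''; linarith))))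

lemma isClosed_S2 : IsClosed S2 := by
  apply IsClosed.union (isClosed_singleton.preimage continuous_fst)
  apply IsClosed.union (isClosed_singleton.preimage continuous_fst)
  exact (isClosed_singleton.preimage continuous_snd).union (isClosed_singleton.preimage continuous_snd)

/-! ### the circle parametrization of S2 -/

def ang (t : I) : ℝ := 2 * π * ((t : ℝ) - 1/2)

lemma cont_ang : Continuous ang := by unfold ang; fun_prop

def w1 (t : I) : ℝ × ℝ := (sin (ang t), cos (ang t))

lemma w1_unit (t : I) : (w1 t).1 ^ 2 + (w1 t).2 ^ 2 = 1 := sin_sq_add_cos_sq _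

def m2 (w : ℝ × ℝ) : ℝ := max |w.1| |w.2|

lemma cont_m2 : Continuous m2 := by unfold m2; fun_prop

lemma m2_pos_of_unit {w : ℝ × ℝ} (h : w.1 ^ 2 + w.2 ^ 2 = 1) : 0 < m2 w := by
  rcases lt_or_ge 0 (m2 w) with h' | h'
  · exact h'
  exfalso
  have h1 : w.1 = 0 := abs_nonpos_iff.1 ((le_max_left _ _).trans h')
  have h2 : w.2 = 0 := abs_nonpos_iff.1 ((le_max_right _ _).trans h')
  rw [h1, h2] at h; norm_num at h

lemma half_add_mem {v m : ℝ} (hm : 0 < m) (hv : |v| ≤ m) : 1/2 + v / (2 * m) ∈ I := by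
  rw [Set.mem_Icc, abs_le] at *
  constructor
  · have h : -(1/2 : ℝ) ≤ v / (2 * m) := by
      rw [le_div_iff₀ (by linarith : (0:ℝ) < 2 * m)]; nlinarith [hv.1]
    linarith
  · have h : v / (2 * m) ≤ 1/2 := by
      rw [div_le_iff₀ (by linarith : (0:ℝ) < 2 * m)]; nlinarith [hv.2]
    linarith

/-- radial projection of a unit vector onto the boundary of the square -/
def pack2 (w : ℝ × ℝ) (hw : w.1 ^ 2 + w.2 ^ 2 = 1) : I × I :=
  (⟨1/2 + w.1 / (2 * m2 w), half_add_mem (m2_pos_of_unit hw) (le_max_left _ _)⟩,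
   ⟨1/2 + w.2 / (2 * m2 w), half_add_mem (m2_pos_of_unit hw) (le_max_right _ _)⟩)

lemma pack2_congr {w w' : ℝ × ℝ} (hw : w.1 ^ 2 + w.2 ^ 2 = 1) (hw' : w'.1 ^ 2 + w'.2 ^ 2 = 1)
    (h : w = w') : pack2 w hw = pack2 w' hw' := by subst h; rfl

lemma pack2_mem (w : ℝ × ℝ) (hw : w.1 ^ 2 + w.2 ^ 2 = 1) : pack2 w hw ∈ S2 := by
  have hm := m2_pos_of_unit hw
  have hmne : m2 w ≠ 0 := ne_of_gt hm
  have key1 : 1/2 + m2 w / (2 * m2 w) = 1 := by field_simp; ring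
  have key0 : 1/2 + -(m2 w) / (2 * m2 w) = 0 := by field_simp; ring
  rcases le_total |w.2| |w.1| with h | h
  · rcases (abs_eq hm.le).1 (max_eq_left h).symm with h' | h'
    · exact Or.inr (Or.inl (I_eq_one_iff.2 (by show 1/2 + w.1 / (2 * m2 w) = 1; rw [h']; exact key1)))
    · exact Or.inl (I_eq_zero_iff.2 (by show 1/2 + w.1 / (2 * m2 w) = 0; rw [h']; exact key0))
  · rcases (abs_eq hm.le).1 (max_eq_right h).symm with h' | h'
    · exact Or.inr (Or.inr (Or.inr (I_eq_one_iff.2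
        (by show 1/2 + w.2 / (2 * m2 w) = 1; rw [h']; exact key1))))
    · exact Or.inr (Or.inr (Or.inl (I_eq_zero_iff.2
        (by show 1/2 + w.2 / (2 * m2 w) = 0; rw [h']; exact key0))))

def q1 (t : I) : I × I := pack2 (w1 t) (w1_unit t)

lemma q1_mem (t : I) : q1 t ∈ S2 := pack2_mem _ _

lemma cont_q1 : Continuous q1 := by
  have hne : ∀ t : I, 2 * m2 (w1 t) ≠ 0 := fun t => by
    have := m2_pos_of_unit (w1_unit t); positivity
  unfold q1 pack2
  refine Continuous.prodMk (Continuous.subtype_mk ?_ _) (Continuous.subtype_mk ?_ _)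
  · exact continuous_const.add ((continuous_sin.comp cont_ang).div
      (continuous_const.mul (cont_m2.comp ((continuous_sin.comp cont_ang).prodMk
        (continuous_cos.comp cont_ang)))) hne)
  · exact continuous_const.add ((continuous_cos.comp cont_ang).div
      (continuous_const.mul (cont_m2.comp ((continuous_sin.comp cont_ang).prodMk
        (continuous_cos.comp cont_ang)))) hne)

/-! ### injectivity / surjectivity of the circle parametrization -/

lemma pack2_inj {w w' : ℝ × ℝ} (hw : w.1 ^ 2 + w.2 ^ 2 = 1) (hw' : w'.1 ^ 2 + w'.2 ^ 2 = 1)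
    (h : pack2 w hw = pack2 w' hw') : w = w' := by
  have hm := m2_pos_of_unit hw
  have hm' := m2_pos_of_unit hw'
  have h1 : w.1 / (2 * m2 w) = w'.1 / (2 * m2 w') := by
    have := Subtype.ext_iff.1 (congrArg Prod.fst h)
    simp only [pack2] at this
    linarith [this]
  have h2 : w.2 / (2 * m2 w) = w'.2 / (2 * m2 w') := by
    have := Subtype.ext_iff.1 (congrArg Prod.snd h)
    simp only [pack2] at this
    linarith [this]
  rw [div_eq_div_iff (by linarith) (by linarith)] at h1 h2
  have c1 : w.1 * m2 w' = w'.1 * m2 w := by linarith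
  have c2 : w.2 * m2 w' = w'.2 * m2 w := by linarith
  have s1 : (w.1 * m2 w') ^ 2 = (w'.1 * m2 w) ^ 2 := by rw [c1]
  have s2 : (w.2 * m2 w') ^ 2 = (w'.2 * m2 w) ^ 2 := by rw [c2]
  have e : (w.1 ^ 2 + w.2 ^ 2) * (m2 w') ^ 2 = (w'.1 ^ 2 + w'.2 ^ 2) * (m2 w) ^ 2 := by
    nlinarith [s1, s2]
  rw [hw, hw', one_mul, one_mul] at e
  have hfac : (m2 w' - m2 w) * (m2 w' + m2 w) = 0 := by nlinarith [e]
  have hmm : m2 w' = m2 w := by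
    rcases mul_eq_zero.1 hfac with h0 | h0
    · linarith
    · exfalso; linarith
  rw [hmm] at c1 c2
  have e1 : w.1 = w'.1 := mul_right_cancel₀ (ne_of_gt hm) c1
  have e2 : w.2 = w'.2 := mul_right_cancel₀ (ne_of_gt hm) c2
  exact Prod.ext e1 e2

lemma circle_inj {θ θ' : ℝ} (h1 : -π ≤ θ) (h2 : θ ≤ π) (h1' : -π ≤ θ') (h2' : θ' ≤ π)
    (hs : sin θ = sin θ') (hc : cos θ = cos θ') : θ = θ' ∨ (|θ| = π ∧ |θ'| = π) := by
  have habs : |θ| = |θ'| := by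
    apply Real.injOn_cos ⟨abs_nonneg _, abs_le.2 ⟨h1, h2⟩⟩ ⟨abs_nonneg _, abs_le.2 ⟨h1', h2'⟩⟩
    rw [cos_abs, cos_abs]; exact hc
  rcases abs_eq_abs.1 habs with h | h
  · exact Or.inl h
  · have hz : sin θ' = 0 := by rw [h, sin_neg] at hs; linarith
    rcases Real.sin_eq_zero_iff.1 hz with ⟨n, hn⟩
    have hπ := Real.pi_pos
    have hn1 : (n : ℝ) ≤ 1 := by
      by_contra hcon
      push_neg at hcon
      nlinarith [hn, h2']
    have hn2 : (-1 : ℝ) ≤ (n : ℝ) := by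
      by_contra hcon
      push_neg at hcon
      nlinarith [hn, h1']
    have hn' : n = -1 ∨ n = 0 ∨ n = 1 := by
      have a1 : n ≤ 1 := by exact_mod_cast hn1
      have a2 : -1 ≤ n := by exact_mod_cast hn2
      omega
    rcases hn' with h' | h' | h'
    · subst h'
      right
      have hθ' : θ' = -π := by push_cast at hn; linarith
      have hθ : θ = π := by rw [h, hθ']; ring
      exact ⟨by rw [hθ]; exact abs_of_pos hπ, by rw [hθ', abs_neg]; exact abs_of_pos hπ⟩
    · subst h'
      left
      have hθ' : θ' = 0 := by push_cast at hn; linarith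
      rw [h, hθ']; norm_num
    · subst h'
      right
      have hθ' : θ' = π := by push_cast at hn; linarith
      have hθ : θ = -π := by rw [h, hθ']
      exact ⟨by rw [hθ, abs_neg]; exact abs_of_pos hπ, by rw [hθ']; exact abs_of_pos hπ⟩

lemma ang_bounds (t : I) : -π ≤ ang t ∧ ang t ≤ π := by
  have h := I_bounds t
  have hπ := Real.pi_pos
  unfold ang
  constructor <;> nlinarith [h.1, h.2]

lemma abs_ang_pi {t : I} (h : |ang t| = π) : t = 0 ∨ t = 1 := by
  have hπ := Real.pi_pos
  have h' : |2 * π| * |(t : ℝ) - 1/2| = π := by rw [← abs_mul]; exact h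
  rw [abs_of_pos (by linarith : (0:ℝ) < 2 * π)] at h'
  have h'' : |(t : ℝ) - 1/2| = 1/2 := by
    have h2 : 2 * π * |(t : ℝ) - 1/2| = 2 * π * (1/2) := by rw [h']; ring
    exact mul_left_cancel₀ (by positivity : (2 * π : ℝ) ≠ 0) h2
  rcases (abs_eq (by norm_num : (0:ℝ) ≤ 1/2)).1 h'' with h3 | h3
  · exact Or.inr (I_eq_one_iff.2 (by linarith))
  · exact Or.inl (I_eq_zero_iff.2 (by linarith))

lemma q1_fiber {t t' : I} (h : q1 t = q1 t') :
    t = t' ∨ ((t = 0 ∨ t = 1) ∧ (t' = 0 ∨ t' = 1)) := by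
  have hw : w1 t = w1 t' := pack2_inj (w1_unit t) (w1_unit t') h
  have hs : sin (ang t) = sin (ang t') := congrArg Prod.fst hw
  have hc : cos (ang t) = cos (ang t') := congrArg Prod.snd hw
  have hb := ang_bounds t
  have hb' := ang_bounds t'
  rcases circle_inj hb.1 hb.2 hb'.1 hb'.2 hs hc with h' | ⟨ha, ha'⟩
  · left
    have h2 : 2 * π * ((t : ℝ) - 1/2) = 2 * π * ((t' : ℝ) - 1/2) := h'
    have := mul_left_cancel₀ (by positivity : (2 * π : ℝ) ≠ 0) h2
    exact Subtype.ext (by linarith)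
  · exact Or.inr ⟨abs_ang_pi ha, abs_ang_pi ha'⟩

lemma circle_surj {u v : ℝ} (huv : u ^ 2 + v ^ 2 = 1) :
    ∃ θ : ℝ, -π ≤ θ ∧ θ ≤ π ∧ sin θ = u ∧ cos θ = v := by
  have hπ := Real.pi_pos
  have hv1 : -1 ≤ v := by nlinarith
  have hv2 : v ≤ 1 := by nlinarith
  have hsin : sin (arccos v) = |u| := by
    rw [Real.sin_arccos, show 1 - v ^ 2 = u ^ 2 by linarith]
    exact Real.sqrt_sq_eq_abs u
  rcases le_or_gt 0 u with h | h
  · exact ⟨arccos v, by linarith [Real.arccos_nonneg v], Real.arccos_le_pi v,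
      by rw [hsin, abs_of_nonneg h], Real.cos_arccos hv1 hv2⟩
  · refine ⟨-arccos v, by linarith [Real.arccos_le_pi v], by linarith [Real.arccos_nonneg v], ?_, ?_⟩
    · rw [Real.sin_neg, hsin, abs_of_neg h]; ring
    · rw [Real.cos_neg]; exact Real.cos_arccos hv1 hv2

lemma q1_surj {z : I × I} (hz : z ∈ S2) : ∃ t : I, q1 t = z := by
  have hπ := Real.pi_pos
  set d1 := aa z with hd1
  set d2 := bb z with hd2
  have hmax : max |d1| |d2| = 1/2 := S2_iff.1 hz
  set r := Real.sqrt (d1 ^ 2 + d2 ^ 2) with hr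
  have hsum : (1/4 : ℝ) ≤ d1 ^ 2 + d2 ^ 2 := by
    rcases le_total |d2| |d1| with h | h
    · rw [max_eq_left h] at hmax
      nlinarith [sq_abs d1, sq_abs d2, abs_nonneg d2]
    · rw [max_eq_right h] at hmax
      nlinarith [sq_abs d1, sq_abs d2, abs_nonneg d1]
  have hrpos : 0 < r := Real.sqrt_pos.2 (by linarith)
  have hr2 : r ^ 2 = d1 ^ 2 + d2 ^ 2 := Real.sq_sqrt (by nlinarith)
  have hunit : (d1 / r) ^ 2 + (d2 / r) ^ 2 = 1 := by
    field_simp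
    linarith [hr2]
  obtain ⟨θ, hθ1, hθ2, hsin, hcos⟩ := circle_surj hunit
  have htmem : θ / (2 * π) + 1/2 ∈ I := by
    rw [Set.mem_Icc]
    constructor
    · have : -(1/2 : ℝ) ≤ θ / (2 * π) := by
        rw [le_div_iff₀ (by positivity : (0:ℝ) < 2 * π)]; nlinarith
      linarith
    · have : θ / (2 * π) ≤ 1/2 := by
        rw [div_le_iff₀ (by positivity : (0:ℝ) < 2 * π)]; nlinarith
      linarith
  set t : I := ⟨θ / (2 * π) + 1/2, htmem⟩ with ht
  have hang : ang t = θ := by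
    show 2 * π * ((θ / (2 * π) + 1/2) - 1/2) = θ
    field_simp
    ring
  have hwt : w1 t = (d1 / r, d2 / r) := by
    unfold w1
    rw [hang, hsin, hcos]
  refine ⟨t, ?_⟩
  have hstep : q1 t = pack2 (d1 / r, d2 / r) (by rw [hwt] at *; exact hunit) :=
    pack2_congr _ _ hwt
  rw [hstep]
  have hm2 : m2 (d1 / r, d2 / r) = 1 / (2 * r) := by
    show max |d1 / r| |d2 / r| = 1 / (2 * r)
    rw [abs_div, abs_div, abs_of_pos hrpos, max_div_div_right hrpos.le, hmax]
    rw [div_div]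
  have hrne : r ≠ 0 := ne_of_gt hrpos
  refine Prod.ext (Subtype.ext ?_) (Subtype.ext ?_)
  · show 1/2 + (d1 / r) / (2 * m2 (d1 / r, d2 / r)) = (z.1 : ℝ)
    have hzv : (z.1 : ℝ) = 1/2 + d1 := by rw [hd1]; unfold aa; ring
    have e2 : (d1 / r) / (2 * (1 / (2 * r))) = d1 := by field_simp
    rw [hm2, e2, hzv]
  · show 1/2 + (d2 / r) / (2 * m2 (d1 / r, d2 / r)) = (z.2 : ℝ)
    have hzv : (z.2 : ℝ) = 1/2 + d2 := by rw [hd2]; unfold bb; ring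
    have e2 : (d2 / r) / (2 * (1 / (2 * r))) = d2 := by field_simp
    rw [hm2, e2, hzv]

/-! ### the cone over the boundary of the square -/

lemma half_add_mul_mem {u c : ℝ} (h0 : 0 ≤ u) (h1 : u ≤ 1) (hc : |c| ≤ 1/2) :
    1/2 + u * c ∈ I := by
  rw [Set.mem_Icc]; rw [abs_le] at hc
  constructor <;> nlinarith

def cone2 (p : I × I) : I × I :=
  (⟨1/2 + (1 - (p.1 : ℝ)) * aa (q1 p.2),
      half_add_mul_mem (by linarith [(I_bounds p.1).2]) (by linarith [(I_bounds p.1).1])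
        (abs_aa_le _)⟩,
   ⟨1/2 + (1 - (p.1 : ℝ)) * bb (q1 p.2),
      half_add_mul_mem (by linarith [(I_bounds p.1).2]) (by linarith [(I_bounds p.1).1])
        (abs_bb_le _)⟩)

lemma cont_cone2 : Continuous cone2 := by
  unfold cone2
  refine Continuous.prodMk (Continuous.subtype_mk ?_ _) (Continuous.subtype_mk ?_ _)
  · exact continuous_const.add ((continuous_const.sub
      (continuous_subtype_val.comp continuous_fst)).mul
      ((cont_aa.comp cont_q1).comp continuous_snd))
  · exact continuous_const.add ((continuous_const.sub
      (continuous_subtype_val.comp continuous_fst)).mul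
      ((cont_bb.comp cont_q1).comp continuous_snd))

lemma cone2_surj : Function.Surjective cone2 := by
  intro y
  set m := max |aa y| |bb y| with hm
  have hm2 : m ≤ 1/2 := max_le (abs_aa_le y) (abs_bb_le y)
  have hm0 : 0 ≤ m := le_trans (abs_nonneg _) (le_max_left _ _)
  rcases eq_or_lt_of_le hm0 with h0 | h0
  · refine ⟨(1, 0), ?_⟩
    have ha : aa y = 0 := abs_eq_zero.1
      (le_antisymm (h0 ▸ le_max_left |aa y| |bb y|) (abs_nonneg _))
    have hb : bb y = 0 := abs_eq_zero.1
      (le_antisymm (h0 ▸ le_max_right |aa y| |bb y|) (abs_nonneg _))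
    refine Prod.ext (Subtype.ext ?_) (Subtype.ext ?_)
    · show 1/2 + (1 - ((1:I):ℝ)) * aa (q1 0) = (y.1 : ℝ)
      have : aa y = (y.1 : ℝ) - 1/2 := rfl
      rw [show ((1:I):ℝ) = 1 from rfl]
      rw [ha] at this
      linarith [this]
    · show 1/2 + (1 - ((1:I):ℝ)) * bb (q1 0) = (y.2 : ℝ)
      have : bb y = (y.2 : ℝ) - 1/2 := rfl
      rw [show ((1:I):ℝ) = 1 from rfl]
      rw [hb] at this
      linarith [this]
  · have hmne : m ≠ 0 := ne_of_gt h0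
    set zb : I × I := (⟨1/2 + aa y / (2*m), half_add_mem h0 (le_max_left _ _)⟩,
        ⟨1/2 + bb y / (2*m), half_add_mem h0 (le_max_right _ _)⟩) with hzb
    have e1 : aa zb = aa y / (2*m) := by
      show (1/2 + aa y / (2*m)) - 1/2 = aa y / (2*m); ring
    have e2 : bb zb = bb y / (2*m) := by
      show (1/2 + bb y / (2*m)) - 1/2 = bb y / (2*m); ring
    have hzbS : zb ∈ S2 := by
      rw [S2_iff, e1, e2, abs_div, abs_div, abs_of_pos (by linarith : (0:ℝ) < 2*m),
        max_div_div_right (by linarith : (0:ℝ) ≤ 2*m), ← hm]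
      field_simp
    obtain ⟨t, ht⟩ := q1_surj hzbS
    refine ⟨(⟨1 - 2*m, by rw [Set.mem_Icc]; constructor <;> linarith⟩, t), ?_⟩
    have hkey : ∀ x : ℝ, 2*m * (x / (2*m)) = x := fun x => by field_simp
    refine Prod.ext (Subtype.ext ?_) (Subtype.ext ?_)
    · show 1/2 + (1 - (1 - 2*m)) * aa (q1 t) = (y.1 : ℝ)
      rw [ht, e1, show (1:ℝ) - (1 - 2*m) = 2*m by ring, hkey]
      have : aa y = (y.1 : ℝ) - 1/2 := rfl
      linarith [this]
    · show 1/2 + (1 - (1 - 2*m)) * bb (q1 t) = (y.2 : ℝ)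
      rw [ht, e2, show (1:ℝ) - (1 - 2*m) = 2*m by ring, hkey]
      have : bb y = (y.2 : ℝ) - 1/2 := rfl
      linarith [this]

lemma max_abs_mul (c x y : ℝ) (hc : 0 ≤ c) : max |c * x| |c * y| = c * max |x| |y| := by
  rw [abs_mul, abs_mul, abs_of_nonneg hc, mul_comm c |x|, mul_comm c |y|,
    ← max_mul_of_nonneg _ _ hc, mul_comm]

lemma cone2_fiber {p p' : I × I} (h : cone2 p = cone2 p') :
    p.1 = p'.1 ∧ ((p.1 : ℝ) = 1 ∨ q1 p.2 = q1 p'.2) := by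
  have h1 : (1 - (p.1:ℝ)) * aa (q1 p.2) = (1 - (p'.1:ℝ)) * aa (q1 p'.2) := by
    have := Subtype.ext_iff.1 (congrArg Prod.fst h)
    simp only [cone2] at this
    linarith [this]
  have h2 : (1 - (p.1:ℝ)) * bb (q1 p.2) = (1 - (p'.1:ℝ)) * bb (q1 p'.2) := by
    have := Subtype.ext_iff.1 (congrArg Prod.snd h)
    simp only [cone2] at this
    linarith [this]
  have hq := S2_iff.1 (q1_mem p.2)
  have hq' := S2_iff.1 (q1_mem p'.2)
  have hE : (1 - (p.1:ℝ)) * (1/2) = (1 - (p'.1:ℝ)) * (1/2) := by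
    have hmax := congrArg₂ max (congrArg abs h1) (congrArg abs h2)
    rwa [max_abs_mul _ _ _ (by linarith [(I_bounds p.1).2]),
      max_abs_mul _ _ _ (by linarith [(I_bounds p'.1).2]), hq, hq'] at hmax
  have hu : (p.1:ℝ) = (p'.1:ℝ) := by linarith
  refine ⟨Subtype.ext hu, ?_⟩
  rcases eq_or_ne ((p.1:ℝ)) 1 with h1' | h1'
  · exact Or.inl h1'
  · right
    have hne : (1 - (p.1:ℝ)) ≠ 0 := fun hcon => h1' (by linarith)
    rw [← hu] at h1 h2
    have ea : aa (q1 p.2) = aa (q1 p'.2) := mul_left_cancel₀ hne h1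
    have eb : bb (q1 p.2) = bb (q1 p'.2) := mul_left_cancel₀ hne h2
    have ca : ((q1 p.2).1 : ℝ) = ((q1 p'.2).1 : ℝ) := by
      have d1 : aa (q1 p.2) = ((q1 p.2).1 : ℝ) - 1/2 := rfl
      have d2 : aa (q1 p'.2) = ((q1 p'.2).1 : ℝ) - 1/2 := rfl
      rw [d1, d2] at ea; linarith
    have cb : ((q1 p.2).2 : ℝ) = ((q1 p'.2).2 : ℝ) := by
      have d1 : bb (q1 p.2) = ((q1 p.2).2 : ℝ) - 1/2 := rfl
      have d2 : bb (q1 p'.2) = ((q1 p'.2).2 : ℝ) - 1/2 := rfl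
      rw [d1, d2] at eb; linarith
    exact Prod.ext (Subtype.ext ca) (Subtype.ext cb)

/-! ### the 2-dimensional extension theorem -/

theorem extend2 {M : Type*} [TopologicalSpace M] [SimplyConnectedSpace M] (F : C(↥S2, M)) :
    ∃ E : C(I × I, M), ∀ z (hz : z ∈ S2), E z = F ⟨z, hz⟩ := by
  have hq10 : q1 1 = q1 0 := by
    apply pack2_congr
    unfold w1
    have e1 : ang 1 = π := by show 2*π*(((1:I):ℝ)-1/2) = π; rw [show ((1:I):ℝ) = 1 from rfl]; ring
    have e0 : ang 0 = -π := by
      show 2*π*(((0:I):ℝ)-1/2) = -π; rw [show ((0:I):ℝ) = 0 from rfl]; ring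
    rw [e1, e0]
    rw [Real.sin_pi, Real.cos_pi, Real.sin_neg, Real.cos_neg, Real.sin_pi, Real.cos_pi, neg_zero]
  set x1 := F ⟨q1 0, q1_mem 0⟩ with hx1
  set ℓ : Path x1 x1 :=
    { toFun := fun t => F ⟨q1 t, q1_mem t⟩
      continuous_toFun := F.continuous.comp (Continuous.subtype_mk cont_q1 _)
      source' := rfl
      target' := by
        show F ⟨q1 1, q1_mem 1⟩ = x1
        rw [show (⟨q1 1, q1_mem 1⟩ : ↥S2) = ⟨q1 0, q1_mem 0⟩ from Subtype.ext hq10] } with hℓ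
  obtain ⟨htpy⟩ := SimplyConnectedSpace.paths_homotopic ℓ (Path.refl x1)
  have hval : ∀ (u t : I), t = 0 ∨ t = 1 → htpy (u, t) = x1 := by
    rintro u t (rfl | rfl)
    · exact htpy.source u
    · exact htpy.target u
  obtain ⟨E, hEc, hEQ⟩ := descend cont_cone2 cone2_surj htpy.continuous
    (fun p p' hpp => by
      obtain ⟨hu, hrest⟩ := cone2_fiber hpp
      rcases hrest with hcase | hcase
      · have hp1 : p.1 = 1 := I_eq_one_iff.2 hcase
        have hp1' : p'.1 = 1 := hu ▸ hp1
        show htpy (p.1, p.2) = htpy (p'.1, p'.2)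
        rw [hp1, hp1', htpy.apply_one, htpy.apply_one]
        rfl
      · rcases q1_fiber hcase with h2 | ⟨h2, h2'⟩
        · rw [show p = p' from Prod.ext hu h2]
        · show htpy (p.1, p.2) = htpy (p'.1, p'.2)
          rw [hval p.1 p.2 h2, hval p'.1 p'.2 h2'])
  refine ⟨⟨E, hEc⟩, fun z hz => ?_⟩
  obtain ⟨t, ht⟩ := q1_surj hz
  have hQ : cone2 (0, t) = z := by
    refine Prod.ext (Subtype.ext ?_) (Subtype.ext ?_)
    · show 1/2 + (1 - ((0:I):ℝ)) * aa (q1 t) = (z.1 : ℝ)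
      rw [ht, show ((0:I):ℝ) = 0 from rfl]
      have : aa z = (z.1 : ℝ) - 1/2 := rfl
      rw [this]; ring
    · show 1/2 + (1 - ((0:I):ℝ)) * bb (q1 t) = (z.2 : ℝ)
      rw [ht, show ((0:I):ℝ) = 0 from rfl]
      have : bb z = (z.2 : ℝ) - 1/2 := rfl
      rw [this]; ring
  have h3 := hEQ (0, t)
  rw [hQ] at h3
  show E z = F ⟨z, hz⟩
  rw [h3, htpy.apply_zero]
  show F ⟨q1 t, q1_mem t⟩ = F ⟨z, hz⟩
  exact congrArg F (Subtype.ext ht)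

/-! ### dimension 3: coordinates and boundary -/

def u3 (z : I × I × I) : ℝ := (z.1 : ℝ) - 1/2
def v3 (z : I × I × I) : ℝ := (z.2.1 : ℝ) - 1/2
def w3 (z : I × I × I) : ℝ := (z.2.2 : ℝ) - 1/2

lemma abs_u3_le (z : I × I × I) : |u3 z| ≤ 1/2 := by
  have h := I_bounds z.1; rw [abs_le]; unfold u3; constructor <;> linarith [h.1, h.2]
lemma abs_v3_le (z : I × I × I) : |v3 z| ≤ 1/2 := by
  have h := I_bounds z.2.1; rw [abs_le]; unfold v3; constructor <;> linarith [h.1, h.2]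
lemma abs_w3_le (z : I × I × I) : |w3 z| ≤ 1/2 := by
  have h := I_bounds z.2.2; rw [abs_le]; unfold w3; constructor <;> linarith [h.1, h.2]

def S3 : Set (I × I × I) :=
  {z | z.1 = 0 ∨ z.1 = 1 ∨ z.2.1 = 0 ∨ z.2.1 = 1 ∨ z.2.2 = 0 ∨ z.2.2 = 1}

lemma S3_iff {z : I × I × I} : z ∈ S3 ↔ max |u3 z| (max |v3 z| |w3 z|) = 1/2 := by
  have habs : ∀ x : I, x = 0 ∨ x = 1 ↔ |(x:ℝ) - 1/2| = 1/2 := by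
    intro x
    constructor
    · rintro (h | h)
      · rw [I_eq_zero_iff.1 h, show (0:ℝ) - 1/2 = -(1/2) by norm_num, abs_neg,
          abs_of_nonneg (by norm_num : (0:ℝ) ≤ 1/2)]
      · rw [I_eq_one_iff.1 h, show (1:ℝ) - 1/2 = 1/2 by norm_num,
          abs_of_nonneg (by norm_num : (0:ℝ) ≤ 1/2)]
    · intro h
      rcases (abs_eq (by norm_num : (0:ℝ) ≤ 1/2)).1 h with h | h
      · exact Or.inr (I_eq_one_iff.2 (by linarith))
      · exact Or.inl (I_eq_zero_iff.2 (by linarith))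
  constructor
  · rintro (h | h | h | h | h | h)
    all_goals apply le_antisymm (max_le (abs_u3_le z) (max_le (abs_v3_le z) (abs_w3_le z)))
    · rw [← (habs z.1).1 (Or.inl h)]; exact le_max_left _ _
    · rw [← (habs z.1).1 (Or.inr h)]; exact le_max_left _ _
    · rw [← (habs z.2.1).1 (Or.inl h)]; exact le_trans (le_max_left _ _) (le_max_right _ _)
    · rw [← (habs z.2.1).1 (Or.inr h)]; exact le_trans (le_max_left _ _) (le_max_right _ _)
    · rw [← (habs z.2.2).1 (Or.inl h)]; exact le_trans (le_max_right _ _) (le_max_right _ _)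
    · rw [← (habs z.2.2).1 (Or.inr h)]; exact le_trans (le_max_right _ _) (le_max_right _ _)
  · intro h
    rcases le_total (max |v3 z| |w3 z|) |u3 z| with h' | h'
    · rw [max_eq_left h'] at h
      rcases (habs z.1).2 h with h'' | h''
      · exact Or.inl h''
      · exact Or.inr (Or.inl h'')
    · rw [max_eq_right h'] at h
      rcases le_total |w3 z| |v3 z| with h2 | h2
      · rw [max_eq_left h2] at h
        rcases (habs z.2.1).2 h with h'' | h''
        · exact Or.inr (Or.inr (Or.inl h''))
        · exact Or.inr (Or.inr (Or.inr (Or.inl h'')))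
      · rw [max_eq_right h2] at h
        rcases (habs z.2.2).2 h with h'' | h''
        · exact Or.inr (Or.inr (Or.inr (Or.inr (Or.inl h''))))
        · exact Or.inr (Or.inr (Or.inr (Or.inr (Or.inr h''))))

lemma isClosed_S3 : IsClosed S3 := by
  have c1 : Continuous fun z : I × I × I => z.1 := continuous_fst
  have c2 : Continuous fun z : I × I × I => z.2.1 := continuous_fst.comp continuous_snd
  have c3 : Continuous fun z : I × I × I => z.2.2 := continuous_snd.comp continuous_snd
  exact (isClosed_singleton.preimage c1).union ((isClosed_singleton.preimage c1).union
    ((isClosed_singleton.preimage c2).union ((isClosed_singleton.preimage c2).union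
    ((isClosed_singleton.preimage c3).union (isClosed_singleton.preimage c3)))))

/-! ### the sphere parametrization -/

def ρ2 (z : I × I) : ℝ := 2 * max |aa z| |bb z|
def rr (z : I × I) : ℝ := Real.sqrt (aa z ^ 2 + bb z ^ 2)

lemma ρ2_nonneg (z : I × I) : 0 ≤ ρ2 z :=
  mul_nonneg (by norm_num) (le_trans (abs_nonneg _) (le_max_left _ _))

lemma ρ2_le_one (z : I × I) : ρ2 z ≤ 1 := by
  have := max_le (abs_aa_le z) (abs_bb_le z)
  unfold ρ2; linarith

lemma rr_nonneg (z : I × I) : 0 ≤ rr z := Real.sqrt_nonneg _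

lemma cont_ρ2 : Continuous ρ2 := by
  unfold ρ2; exact continuous_const.mul ((cont_aa.abs).max (cont_bb.abs))

lemma cont_rr : Continuous rr := by
  unfold rr
  exact Real.continuous_sqrt.comp ((cont_aa.pow 2).add (cont_bb.pow 2))

lemma rr_eq_zero {z : I × I} (h : rr z = 0) : aa z = 0 ∧ bb z = 0 := by
  have h' : aa z ^ 2 + bb z ^ 2 ≤ 0 := Real.sqrt_eq_zero'.1 h
  constructor <;> nlinarith [sq_nonneg (aa z), sq_nonneg (bb z)]

lemma ρ2_eq_zero_of_rr {z : I × I} (h : rr z = 0) : ρ2 z = 0 := by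
  obtain ⟨h1, h2⟩ := rr_eq_zero h
  unfold ρ2; rw [h1, h2]; simp

lemma abs_aa_le_rr (z : I × I) : |aa z| ≤ rr z := by
  rw [← Real.sqrt_sq_eq_abs]
  exact Real.sqrt_le_sqrt (by nlinarith [sq_nonneg (bb z)])

lemma abs_bb_le_rr (z : I × I) : |bb z| ≤ rr z := by
  rw [← Real.sqrt_sq_eq_abs]
  exact Real.sqrt_le_sqrt (by nlinarith [sq_nonneg (aa z)])

lemma ρ2_le_rr (z : I × I) : ρ2 z ≤ 2 * rr z := by
  unfold ρ2
  rcases max_cases |aa z| |bb z| with ⟨h, _⟩ | ⟨h, _⟩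
  · rw [h]; linarith [abs_aa_le_rr z]
  · rw [h]; linarith [abs_bb_le_rr z]

/-- the map of the square onto the unit sphere collapsing the boundary to the south pole -/
def sph (z : I × I) : ℝ × ℝ × ℝ :=
  (aa z * Real.sin (π * ρ2 z) / rr z, bb z * Real.sin (π * ρ2 z) / rr z, Real.cos (π * ρ2 z))

lemma sph_unit (z : I × I) : (sph z).1 ^ 2 + (sph z).2.1 ^ 2 + (sph z).2.2 ^ 2 = 1 := by
  unfold sph
  by_cases h : rr z = 0
  · rw [h, div_zero, div_zero, ρ2_eq_zero_of_rr h]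
    norm_num
  · have hr2 : rr z ^ 2 = aa z ^ 2 + bb z ^ 2 := Real.sq_sqrt (by positivity)
    have key := Real.sin_sq_add_cos_sq (π * ρ2 z)
    field_simp
    nlinarith [key, hr2]

lemma cont_radial_comp {c : I × I → ℝ} (hc : Continuous c) (hle : ∀ z, |c z| ≤ rr z) :
    Continuous fun z => c z * Real.sin (π * ρ2 z) / rr z := by
  have hπ := Real.pi_pos
  rw [continuous_iff_continuousAt]
  intro z₀
  by_cases h : rr z₀ = 0
  · have hval : (fun z => c z * Real.sin (π * ρ2 z) / rr z) z₀ = 0 := by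
      show c z₀ * Real.sin (π * ρ2 z₀) / rr z₀ = 0
      rw [h, div_zero]
    unfold ContinuousAt
    rw [hval]
    apply squeeze_zero_norm (a := fun z => π * ρ2 z)
    · intro z
      rw [Real.norm_eq_abs]
      by_cases hz : rr z = 0
      · rw [hz, div_zero, abs_zero]
        have := ρ2_nonneg z; positivity
      · have hr0 : 0 < rr z := lt_of_le_of_ne (rr_nonneg z) (Ne.symm hz)
        have hρ0 := ρ2_nonneg z
        have hρ1 := ρ2_le_one z
        have hsin0 : 0 ≤ Real.sin (π * ρ2 z) :=
          Real.sin_nonneg_of_nonneg_of_le_pi (by positivity) (by nlinarith)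
        have hsinle : Real.sin (π * ρ2 z) ≤ π * ρ2 z := Real.sin_le (by positivity)
        rw [abs_div, abs_of_pos hr0, abs_mul, abs_of_nonneg hsin0]
        rw [div_le_iff₀ hr0]
        calc |c z| * Real.sin (π * ρ2 z) ≤ rr z * Real.sin (π * ρ2 z) :=
              mul_le_mul_of_nonneg_right (hle z) hsin0
          _ ≤ rr z * (π * ρ2 z) := mul_le_mul_of_nonneg_left hsinle hr0.le
          _ = π * ρ2 z * rr z := by ring
    · have hz0 : ρ2 z₀ = 0 := ρ2_eq_zero_of_rr h
      have htt : Filter.Tendsto (fun z => π * ρ2 z) (nhds z₀) (nhds (π * ρ2 z₀)) :=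
        (continuous_const.mul cont_ρ2).tendsto z₀
      rwa [hz0, mul_zero] at htt
  · exact ContinuousAt.div ((hc.mul (Real.continuous_sin.comp
      (continuous_const.mul cont_ρ2))).continuousAt) cont_rr.continuousAt h

lemma cont_sph : Continuous sph := by
  unfold sph
  exact (cont_radial_comp cont_aa abs_aa_le_rr).prodMk
    ((cont_radial_comp cont_bb abs_bb_le_rr).prodMk
      (Real.continuous_cos.comp (continuous_const.mul cont_ρ2)))

lemma sph_boundary {z : I × I} (h : z ∈ S2) : sph z = (0, 0, -1) := by
  have hρ : ρ2 z = 1 := by unfold ρ2; rw [S2_iff.1 h]; norm_num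
  unfold sph
  rw [hρ, mul_one, Real.sin_pi, Real.cos_pi, mul_zero, zero_div, mul_zero, zero_div]

lemma S2_iff_ρ2 {z : I × I} : z ∈ S2 ↔ ρ2 z = 1 := by
  rw [S2_iff]
  unfold ρ2
  constructor <;> intro h <;> linarith

lemma sph_inj {z z' : I × I} (h : sph z = sph z') : z = z' ∨ (z ∈ S2 ∧ z' ∈ S2) := by
  have hπ := Real.pi_pos
  have h3 : Real.cos (π * ρ2 z) = Real.cos (π * ρ2 z') := congrArg (fun w => w.2.2) h
  have hρ : ρ2 z = ρ2 z' := by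
    have h4 := Real.injOn_cos ⟨mul_nonneg hπ.le (ρ2_nonneg z), by nlinarith [ρ2_le_one z]⟩
      ⟨mul_nonneg hπ.le (ρ2_nonneg z'), by nlinarith [ρ2_le_one z']⟩ h3
    exact mul_left_cancel₀ (ne_of_gt hπ) h4
  rcases eq_or_lt_of_le (ρ2_le_one z) with h1 | h1
  · exact Or.inr ⟨S2_iff_ρ2.2 h1, S2_iff_ρ2.2 (hρ ▸ h1)⟩
  · left
    rcases eq_or_lt_of_le (ρ2_nonneg z) with h0 | h0
    · have hza : aa z = 0 ∧ bb z = 0 := by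
        have hm : max |aa z| |bb z| = 0 := by unfold ρ2 at h0; linarith
        constructor
        · exact abs_eq_zero.1 (le_antisymm (hm ▸ le_max_left _ _) (abs_nonneg _))
        · exact abs_eq_zero.1 (le_antisymm (hm ▸ le_max_right _ _) (abs_nonneg _))
      have hza' : aa z' = 0 ∧ bb z' = 0 := by
        have hm : max |aa z'| |bb z'| = 0 := by unfold ρ2 at hρ h0; linarith
        constructor
        · exact abs_eq_zero.1 (le_antisymm (hm ▸ le_max_left _ _) (abs_nonneg _))
        · exact abs_eq_zero.1 (le_antisymm (hm ▸ le_max_right _ _) (abs_nonneg _))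
      refine Prod.ext (Subtype.ext ?_) (Subtype.ext ?_)
      · have d1 : aa z = (z.1 : ℝ) - 1/2 := rfl
        have d2 : aa z' = (z'.1 : ℝ) - 1/2 := rfl
        rw [d1] at hza; rw [d2] at hza'; linarith [hza.1, hza'.1]
      · have d1 : bb z = (z.2 : ℝ) - 1/2 := rfl
        have d2 : bb z' = (z'.2 : ℝ) - 1/2 := rfl
        rw [d1] at hza; rw [d2] at hza'; linarith [hza.2, hza'.2]
    · -- 0 < ρ2 z < 1
      have hs : 0 < Real.sin (π * ρ2 z) :=
        Real.sin_pos_of_pos_of_lt_pi (by positivity) (by nlinarith [ρ2_le_one z])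
      have hrz : 0 < rr z := by
        rcases lt_or_ge 0 (rr z) with h' | h'
        · exact h'
        · exfalso
          have : rr z = 0 := le_antisymm h' (rr_nonneg z)
          have := ρ2_eq_zero_of_rr this
          linarith
      have hrz' : 0 < rr z' := by
        rcases lt_or_ge 0 (rr z') with h' | h'
        · exact h'
        · exfalso
          have h'' : rr z' = 0 := le_antisymm h' (rr_nonneg z')
          have := ρ2_eq_zero_of_rr h''
          rw [← hρ] at this
          linarith
      set Λ := Real.sin (π * ρ2 z) / rr z with hΛ
      set Λ' := Real.sin (π * ρ2 z) / rr z' with hΛ'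
      have hΛpos : 0 < Λ := div_pos hs hrz
      have hΛ'pos : 0 < Λ' := div_pos hs hrz'
      have h1c : aa z * Λ = aa z' * Λ' := by
        have hcc := congrArg (fun w : ℝ × ℝ × ℝ => w.1) h
        simp only [sph] at hcc
        rw [hρ] at hcc
        rw [hΛ, hΛ', ← mul_div_assoc, ← mul_div_assoc, hρ]
        exact hcc
      have h2c : bb z * Λ = bb z' * Λ' := by
        have hcc := congrArg (fun w : ℝ × ℝ × ℝ => w.2.1) h
        simp only [sph] at hcc
        rw [hρ] at hcc
        rw [hΛ, hΛ', ← mul_div_assoc, ← mul_div_assoc, hρ]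
        exact hcc
      have hmax : Λ * max |aa z| |bb z| = Λ' * max |aa z| |bb z| := by
        have hmm := congrArg₂ max (congrArg abs h1c) (congrArg abs h2c)
        rw [mul_comm (aa z) Λ, mul_comm (bb z) Λ, mul_comm (aa z') Λ', mul_comm (bb z') Λ',
          max_abs_mul _ _ _ hΛpos.le, max_abs_mul _ _ _ hΛ'pos.le] at hmm
        have e2 : max |aa z'| |bb z'| = max |aa z| |bb z| := by
          have e3 : 2 * max |aa z'| |bb z'| = 2 * max |aa z| |bb z| := hρ.symm
          linarith
        rw [e2] at hmm
        exact hmm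
      have hmaxpos : 0 < max |aa z| |bb z| := by
        have : ρ2 z = 2 * max |aa z| |bb z| := rfl
        linarith
      have hΛeq : Λ = Λ' := mul_right_cancel₀ (ne_of_gt hmaxpos) hmax
      rw [hΛeq] at h1c h2c
      have ea : aa z = aa z' := mul_right_cancel₀ (ne_of_gt hΛ'pos) h1c
      have eb : bb z = bb z' := mul_right_cancel₀ (ne_of_gt hΛ'pos) h2c
      refine Prod.ext (Subtype.ext ?_) (Subtype.ext ?_)
      · have d1 : aa z = (z.1 : ℝ) - 1/2 := rfl
        have d2 : aa z' = (z'.1 : ℝ) - 1/2 := rfl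
        rw [d1, d2] at ea; linarith
      · have d1 : bb z = (z.2 : ℝ) - 1/2 := rfl
        have d2 : bb z' = (z'.2 : ℝ) - 1/2 := rfl
        rw [d1, d2] at eb; linarith

/-! ### center point and poles -/

def ctr : I × I := (⟨1/2, ⟨by norm_num, by norm_num⟩⟩, ⟨1/2, ⟨by norm_num, by norm_num⟩⟩)

lemma aa_ctr : aa ctr = 0 := by show (1/2 : ℝ) - 1/2 = 0; ring
lemma bb_ctr : bb ctr = 0 := by show (1/2 : ℝ) - 1/2 = 0; ring

lemma sph_ctr : sph ctr = (0, 0, 1) := by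
  have h1 : rr ctr = 0 := by unfold rr; rw [aa_ctr, bb_ctr]; simp
  have h2 : ρ2 ctr = 0 := ρ2_eq_zero_of_rr h1
  unfold sph
  rw [h1, h2, div_zero, div_zero, mul_zero, Real.cos_zero]

lemma sph_surj {w : ℝ × ℝ × ℝ} (hw : w.1 ^ 2 + w.2.1 ^ 2 + w.2.2 ^ 2 = 1) :
    ∃ z : I × I, sph z = w := by
  have hπ := Real.pi_pos
  have hb1 : -1 ≤ w.2.2 := by nlinarith
  have hb2 : w.2.2 ≤ 1 := by nlinarith
  set θ := Real.arccos w.2.2 with hθdef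
  have hθ0 : 0 ≤ θ := Real.arccos_nonneg _
  have hθπ : θ ≤ π := Real.arccos_le_pi _
  have hcosθ : Real.cos θ = w.2.2 := Real.cos_arccos hb1 hb2
  rcases eq_or_lt_of_le hθ0 with h0 | h0
  · have hc : w.2.2 = 1 := by rw [← hcosθ, ← h0, Real.cos_zero]
    have h1 : w.1 = 0 := by nlinarith
    have h2 : w.2.1 = 0 := by nlinarith
    refine ⟨ctr, ?_⟩
    rw [sph_ctr]
    exact Prod.ext h1.symm (Prod.ext h2.symm hc.symm)
  rcases eq_or_lt_of_le hθπ with hπc | hπc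
  · have hc : w.2.2 = -1 := by rw [← hcosθ, hπc, Real.cos_pi]
    have h1 : w.1 = 0 := by nlinarith
    have h2 : w.2.1 = 0 := by nlinarith
    refine ⟨((0:I), (0:I)), ?_⟩
    rw [sph_boundary (Or.inl rfl)]
    exact Prod.ext h1.symm (Prod.ext h2.symm hc.symm)
  · have hs : 0 < Real.sin θ := Real.sin_pos_of_pos_of_lt_pi h0 hπc
    have hh : w.1 ^ 2 + w.2.1 ^ 2 = Real.sin θ ^ 2 := by
      have hpy := Real.sin_sq_add_cos_sq θ
      rw [hcosθ] at hpy; linarith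
    set mx := max |w.1| |w.2.1| with hmx
    have hmxpos : 0 < mx := by
      rcases lt_or_ge 0 mx with h' | h'
      · exact h'
      · exfalso
        have e1 : w.1 = 0 := abs_eq_zero.1 (le_antisymm ((le_max_left _ _).trans h') (abs_nonneg _))
        have e2 : w.2.1 = 0 :=
          abs_eq_zero.1 (le_antisymm ((le_max_right _ _).trans h') (abs_nonneg _))
        rw [e1, e2] at hh; nlinarith
    set ρ := θ / π with hρdef
    have hρ0 : 0 < ρ := div_pos h0 hπ
    have hρ1 : ρ < 1 := (div_lt_one hπ).2 hπc
    set c := ρ / (2 * mx) with hcdef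
    have hcpos : 0 < c := div_pos hρ0 (by linarith)
    have habs1 : |c * w.1| ≤ ρ/2 := by
      rw [abs_mul, abs_of_pos hcpos, hcdef, div_mul_eq_mul_div,
        div_le_div_iff₀ (by linarith : (0:ℝ) < 2 * mx) (by norm_num : (0:ℝ) < 2)]
      have hp := mul_le_mul_of_nonneg_left (le_max_left |w.1| |w.2.1|) hρ0.le
      nlinarith [hp]
    have habs2 : |c * w.2.1| ≤ ρ/2 := by
      rw [abs_mul, abs_of_pos hcpos, hcdef, div_mul_eq_mul_div,
        div_le_div_iff₀ (by linarith : (0:ℝ) < 2 * mx) (by norm_num : (0:ℝ) < 2)]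
      have hp := mul_le_mul_of_nonneg_left (le_max_right |w.1| |w.2.1|) hρ0.le
      nlinarith [hp]
    have hm1 : c * w.1 + 1/2 ∈ I := by
      rw [abs_le] at habs1
      exact ⟨by linarith [habs1.1], by linarith [habs1.2]⟩
    have hm2 : c * w.2.1 + 1/2 ∈ I := by
      rw [abs_le] at habs2
      exact ⟨by linarith [habs2.1], by linarith [habs2.2]⟩
    refine ⟨(⟨c * w.1 + 1/2, hm1⟩, ⟨c * w.2.1 + 1/2, hm2⟩), ?_⟩
    set z : I × I := (⟨c * w.1 + 1/2, hm1⟩, ⟨c * w.2.1 + 1/2, hm2⟩) with hzdef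
    have haa : aa z = c * w.1 := by show (c * w.1 + 1/2) - 1/2 = c * w.1; ring
    have hbb : bb z = c * w.2.1 := by show (c * w.2.1 + 1/2) - 1/2 = c * w.2.1; ring
    have hρz : ρ2 z = ρ := by
      unfold ρ2
      rw [haa, hbb, max_abs_mul _ _ _ hcpos.le, ← hmx, hcdef]
      field_simp
    have hrrz : rr z = c * Real.sin θ := by
      unfold rr
      rw [haa, hbb]
      have e : (c * w.1) ^ 2 + (c * w.2.1) ^ 2 = (c * Real.sin θ) ^ 2 := by
        rw [mul_pow, mul_pow, mul_pow, ← mul_add, hh]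
      rw [e, Real.sqrt_sq_eq_abs, abs_of_pos (mul_pos hcpos hs)]
    have hπρ : π * ρ2 z = θ := by
      rw [hρz, hρdef]
      field_simp
    show sph z = w
    unfold sph
    rw [haa, hbb, hπρ, hrrz, hcosθ]
    refine Prod.ext ?_ (Prod.ext ?_ rfl)
    · show c * w.1 * Real.sin θ / (c * Real.sin θ) = w.1
      field_simp
    · show c * w.2.1 * Real.sin θ / (c * Real.sin θ) = w.2.1
      field_simp

/-! ### radial projection onto the boundary of the cube -/

def m3 (w : ℝ × ℝ × ℝ) : ℝ := max |w.1| (max |w.2.1| |w.2.2|)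

lemma cont_m3 : Continuous m3 := by
  unfold m3
  exact (continuous_fst.abs).max (((continuous_fst.comp continuous_snd).abs).max
    ((continuous_snd.comp continuous_snd).abs))

lemma m3_pos_of_unit {w : ℝ × ℝ × ℝ} (h : w.1 ^ 2 + w.2.1 ^ 2 + w.2.2 ^ 2 = 1) : 0 < m3 w := by
  rcases lt_or_ge 0 (m3 w) with h' | h'
  · exact h'
  exfalso
  have h1 : w.1 = 0 := abs_nonpos_iff.1 ((le_max_left _ _).trans h')
  have h2 : w.2.1 = 0 :=
    abs_nonpos_iff.1 (((le_max_left _ _).trans (le_max_right _ _)).trans h')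
  have h3 : w.2.2 = 0 :=
    abs_nonpos_iff.1 (((le_max_right _ _).trans (le_max_right _ _)).trans h')
  rw [h1, h2, h3] at h; norm_num at h

def pack3 (w : ℝ × ℝ × ℝ) (hw : w.1 ^ 2 + w.2.1 ^ 2 + w.2.2 ^ 2 = 1) : I × I × I :=
  (⟨1/2 + w.1 / (2 * m3 w), half_add_mem (m3_pos_of_unit hw) (le_max_left _ _)⟩,
   ⟨1/2 + w.2.1 / (2 * m3 w),
      half_add_mem (m3_pos_of_unit hw) ((le_max_left _ _).trans (le_max_right _ _))⟩,
   ⟨1/2 + w.2.2 / (2 * m3 w),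
      half_add_mem (m3_pos_of_unit hw) ((le_max_right _ _).trans (le_max_right _ _))⟩)

lemma pack3_congr {w w' : ℝ × ℝ × ℝ} (hw : w.1 ^ 2 + w.2.1 ^ 2 + w.2.2 ^ 2 = 1)
    (hw' : w'.1 ^ 2 + w'.2.1 ^ 2 + w'.2.2 ^ 2 = 1) (h : w = w') : pack3 w hw = pack3 w' hw' := by
  subst h; rfl

lemma pack3_mem (w : ℝ × ℝ × ℝ) (hw : w.1 ^ 2 + w.2.1 ^ 2 + w.2.2 ^ 2 = 1) :
    pack3 w hw ∈ S3 := by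
  have hm := m3_pos_of_unit hw
  have hmne : m3 w ≠ 0 := ne_of_gt hm
  have key1 : 1/2 + m3 w / (2 * m3 w) = 1 := by field_simp; ring
  have key0 : 1/2 + -(m3 w) / (2 * m3 w) = 0 := by field_simp; ring
  rcases le_total (max |w.2.1| |w.2.2|) |w.1| with h | h
  · rcases (abs_eq hm.le).1 (max_eq_left h).symm with h' | h'
    · exact Or.inr (Or.inl (I_eq_one_iff.2
        (by show 1/2 + w.1 / (2 * m3 w) = 1; rw [h']; exact key1)))
    · exact Or.inl (I_eq_zero_iff.2
        (by show 1/2 + w.1 / (2 * m3 w) = 0; rw [h']; exact key0))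
  · have houter : m3 w = max |w.2.1| |w.2.2| := max_eq_right h
    rcases le_total |w.2.2| |w.2.1| with h2 | h2
    · have hin : max |w.2.1| |w.2.2| = |w.2.1| := max_eq_left h2
      rcases (abs_eq hm.le).1 (houter ▸ hin).symm with h' | h'
      · exact Or.inr (Or.inr (Or.inr (Or.inl (I_eq_one_iff.2
          (by show 1/2 + w.2.1 / (2 * m3 w) = 1; rw [h']; exact key1)))))
      · exact Or.inr (Or.inr (Or.inl (I_eq_zero_iff.2
          (by show 1/2 + w.2.1 / (2 * m3 w) = 0; rw [h']; exact key0))))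
    · have hin : max |w.2.1| |w.2.2| = |w.2.2| := max_eq_right h2
      rcases (abs_eq hm.le).1 (houter ▸ hin).symm with h' | h'
      · exact Or.inr (Or.inr (Or.inr (Or.inr (Or.inr (I_eq_one_iff.2
          (by show 1/2 + w.2.2 / (2 * m3 w) = 1; rw [h']; exact key1))))))
      · exact Or.inr (Or.inr (Or.inr (Or.inr (Or.inl (I_eq_zero_iff.2
          (by show 1/2 + w.2.2 / (2 * m3 w) = 0; rw [h']; exact key0))))))

lemma pack3_inj {w w' : ℝ × ℝ × ℝ} (hw : w.1 ^ 2 + w.2.1 ^ 2 + w.2.2 ^ 2 = 1)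
    (hw' : w'.1 ^ 2 + w'.2.1 ^ 2 + w'.2.2 ^ 2 = 1) (h : pack3 w hw = pack3 w' hw') : w = w' := by
  have hm := m3_pos_of_unit hw
  have hm' := m3_pos_of_unit hw'
  have h1 : w.1 / (2 * m3 w) = w'.1 / (2 * m3 w') := by
    have hq := Subtype.ext_iff.1 (congrArg Prod.fst h)
    simp only [pack3] at hq
    linarith [hq]
  have h2 : w.2.1 / (2 * m3 w) = w'.2.1 / (2 * m3 w') := by
    have hq := Subtype.ext_iff.1 (congrArg (fun p : I × I × I => p.2.1) h)
    simp only [pack3] at hq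
    linarith [hq]
  have h3 : w.2.2 / (2 * m3 w) = w'.2.2 / (2 * m3 w') := by
    have hq := Subtype.ext_iff.1 (congrArg (fun p : I × I × I => p.2.2) h)
    simp only [pack3] at hq
    linarith [hq]
  rw [div_eq_div_iff (by linarith) (by linarith)] at h1 h2 h3
  have c1 : w.1 * m3 w' = w'.1 * m3 w := by linarith
  have c2 : w.2.1 * m3 w' = w'.2.1 * m3 w := by linarith
  have c3 : w.2.2 * m3 w' = w'.2.2 * m3 w := by linarith
  have s1 : (w.1 * m3 w') ^ 2 = (w'.1 * m3 w) ^ 2 := by rw [c1]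
  have s2 : (w.2.1 * m3 w') ^ 2 = (w'.2.1 * m3 w) ^ 2 := by rw [c2]
  have s3 : (w.2.2 * m3 w') ^ 2 = (w'.2.2 * m3 w) ^ 2 := by rw [c3]
  have e : (w.1 ^ 2 + w.2.1 ^ 2 + w.2.2 ^ 2) * (m3 w') ^ 2
      = (w'.1 ^ 2 + w'.2.1 ^ 2 + w'.2.2 ^ 2) * (m3 w) ^ 2 := by nlinarith [s1, s2, s3]
  rw [hw, hw', one_mul, one_mul] at e
  have hfac : (m3 w' - m3 w) * (m3 w' + m3 w) = 0 := by nlinarith [e]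
  have hmm : m3 w' = m3 w := by
    rcases mul_eq_zero.1 hfac with h0 | h0
    · linarith
    · exfalso; linarith
  rw [hmm] at c1 c2 c3
  exact Prod.ext (mul_right_cancel₀ (ne_of_gt hm) c1)
    (Prod.ext (mul_right_cancel₀ (ne_of_gt hm) c2) (mul_right_cancel₀ (ne_of_gt hm) c3))

/-! ### the parametrization of the boundary of the cube -/

def q2 (z : I × I) : I × I × I := pack3 (sph z) (sph_unit z)

lemma q2_mem (z : I × I) : q2 z ∈ S3 := pack3_mem _ _

lemma cont_q2 : Continuous q2 := by
  have hne : ∀ z : I × I, 2 * m3 (sph z) ≠ 0 := fun z => by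
    have := m3_pos_of_unit (sph_unit z); positivity
  have hm3c : Continuous fun z : I × I => m3 (sph z) := cont_m3.comp cont_sph
  have h1 : Continuous fun z : I × I => (sph z).1 := continuous_fst.comp cont_sph
  have h2 : Continuous fun z : I × I => (sph z).2.1 :=
    (continuous_fst.comp continuous_snd).comp cont_sph
  have h3 : Continuous fun z : I × I => (sph z).2.2 :=
    (continuous_snd.comp continuous_snd).comp cont_sph
  unfold q2 pack3
  exact (Continuous.subtype_mk (continuous_const.add
      (h1.div (continuous_const.mul hm3c) hne)) _).prodMk
    ((Continuous.subtype_mk (continuous_const.add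
      (h2.div (continuous_const.mul hm3c) hne)) _).prodMk
    (Continuous.subtype_mk (continuous_const.add
      (h3.div (continuous_const.mul hm3c) hne)) _))

lemma q2_boundary {z : I × I} (h : z ∈ S2) : q2 z = q2 ((0:I), (0:I)) :=
  pack3_congr _ _ (by rw [sph_boundary h, sph_boundary (Or.inl rfl)])

lemma q2_fiber {z z' : I × I} (h : q2 z = q2 z') : z = z' ∨ (z ∈ S2 ∧ z' ∈ S2) :=
  sph_inj (pack3_inj _ _ h)

lemma q2_surj {y : I × I × I} (hy : y ∈ S3) : ∃ z : I × I, q2 z = y := by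
  set d1 := u3 y with hd1
  set d2 := v3 y with hd2
  set d3 := w3 y with hd3
  have hmax : max |d1| (max |d2| |d3|) = 1/2 := S3_iff.1 hy
  set R := Real.sqrt (d1 ^ 2 + d2 ^ 2 + d3 ^ 2) with hR
  have hsum : (1/4 : ℝ) ≤ d1 ^ 2 + d2 ^ 2 + d3 ^ 2 := by
    rcases le_total (max |d2| |d3|) |d1| with h | h
    · rw [max_eq_left h] at hmax
      nlinarith [sq_abs d1, sq_nonneg d2, sq_nonneg d3]
    · rw [max_eq_right h] at hmax
      rcases le_total |d3| |d2| with h2 | h2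
      · rw [max_eq_left h2] at hmax
        nlinarith [sq_abs d2, sq_nonneg d1, sq_nonneg d3]
      · rw [max_eq_right h2] at hmax
        nlinarith [sq_abs d3, sq_nonneg d1, sq_nonneg d2]
  have hRpos : 0 < R := Real.sqrt_pos.2 (by linarith)
  have hRne : R ≠ 0 := ne_of_gt hRpos
  have hR2 : R ^ 2 = d1 ^ 2 + d2 ^ 2 + d3 ^ 2 := Real.sq_sqrt (by nlinarith)
  have hunit : (d1 / R) ^ 2 + (d2 / R) ^ 2 + (d3 / R) ^ 2 = 1 := by
    field_simp
    linarith [hR2]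
  obtain ⟨z, hz⟩ := sph_surj (w := (d1 / R, d2 / R, d3 / R)) hunit
  refine ⟨z, ?_⟩
  have hstep : q2 z = pack3 (d1 / R, d2 / R, d3 / R) hunit := pack3_congr _ _ hz
  rw [hstep]
  have hm3 : m3 (d1 / R, d2 / R, d3 / R) = 1 / (2 * R) := by
    show max |d1 / R| (max |d2 / R| |d3 / R|) = 1 / (2 * R)
    rw [abs_div, abs_div, abs_div, abs_of_pos hRpos, max_div_div_right hRpos.le,
      max_div_div_right hRpos.le, hmax, div_div]
  have e2 : ∀ x : ℝ, (x / R) / (2 * (1 / (2 * R))) = x := fun x => by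
    field_simp
  refine Prod.ext (Subtype.ext ?_) (Prod.ext (Subtype.ext ?_) (Subtype.ext ?_))
  · show 1/2 + (d1 / R) / (2 * m3 (d1 / R, d2 / R, d3 / R)) = (y.1 : ℝ)
    rw [hm3, e2]
    have hzv : d1 = (y.1 : ℝ) - 1/2 := rfl
    linarith [hzv]
  · show 1/2 + (d2 / R) / (2 * m3 (d1 / R, d2 / R, d3 / R)) = (y.2.1 : ℝ)
    rw [hm3, e2]
    have hzv : d2 = (y.2.1 : ℝ) - 1/2 := rfl
    linarith [hzv]
  · show 1/2 + (d3 / R) / (2 * m3 (d1 / R, d2 / R, d3 / R)) = (y.2.2 : ℝ)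
    rw [hm3, e2]
    have hzv : d3 = (y.2.2 : ℝ) - 1/2 := rfl
    linarith [hzv]

/-! ### the cone over the boundary of the cube -/

def cone3 (p : I × I × I) : I × I × I :=
  (⟨1/2 + (1 - (p.1 : ℝ)) * u3 (q2 p.2),
      half_add_mul_mem (by linarith [(I_bounds p.1).2]) (by linarith [(I_bounds p.1).1])
        (abs_u3_le _)⟩,
   ⟨1/2 + (1 - (p.1 : ℝ)) * v3 (q2 p.2),
      half_add_mul_mem (by linarith [(I_bounds p.1).2]) (by linarith [(I_bounds p.1).1])
        (abs_v3_le _)⟩,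
   ⟨1/2 + (1 - (p.1 : ℝ)) * w3 (q2 p.2),
      half_add_mul_mem (by linarith [(I_bounds p.1).2]) (by linarith [(I_bounds p.1).1])
        (abs_w3_le _)⟩)

lemma cont_u3 : Continuous u3 := by
  unfold u3; fun_prop
lemma cont_v3 : Continuous v3 := by
  unfold v3; fun_prop
lemma cont_w3 : Continuous w3 := by
  unfold w3; fun_prop

lemma cont_cone3 : Continuous cone3 := by
  have hu : Continuous fun p : I × I × I => (1 - (p.1 : ℝ)) :=
    continuous_const.sub (continuous_subtype_val.comp continuous_fst)
  unfold cone3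
  exact (Continuous.subtype_mk (continuous_const.add
      (hu.mul ((cont_u3.comp cont_q2).comp continuous_snd))) _).prodMk
    ((Continuous.subtype_mk (continuous_const.add
      (hu.mul ((cont_v3.comp cont_q2).comp continuous_snd))) _).prodMk
    (Continuous.subtype_mk (continuous_const.add
      (hu.mul ((cont_w3.comp cont_q2).comp continuous_snd))) _))

lemma cone3_surj : Function.Surjective cone3 := by
  intro y
  set m := max |u3 y| (max |v3 y| |w3 y|) with hm
  have hm2 : m ≤ 1/2 := max_le (abs_u3_le y) (max_le (abs_v3_le y) (abs_w3_le y))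
  have hm0 : 0 ≤ m := le_trans (abs_nonneg _) (le_max_left _ _)
  rcases eq_or_lt_of_le hm0 with h0 | h0
  · refine ⟨(1, ((0:I), (0:I))), ?_⟩
    have ha : u3 y = 0 := abs_eq_zero.1
      (le_antisymm (h0 ▸ le_max_left |u3 y| (max |v3 y| |w3 y|)) (abs_nonneg _))
    have hb : v3 y = 0 := abs_eq_zero.1 (le_antisymm
      (h0 ▸ le_trans (le_max_left _ _) (le_max_right |u3 y| (max |v3 y| |w3 y|))) (abs_nonneg _))
    have hc : w3 y = 0 := abs_eq_zero.1 (le_antisymm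
      (h0 ▸ le_trans (le_max_right _ _) (le_max_right |u3 y| (max |v3 y| |w3 y|))) (abs_nonneg _))
    refine Prod.ext (Subtype.ext ?_) (Prod.ext (Subtype.ext ?_) (Subtype.ext ?_))
    · show 1/2 + (1 - ((1:I):ℝ)) * u3 (q2 ((0:I), (0:I))) = (y.1 : ℝ)
      have hv : u3 y = (y.1 : ℝ) - 1/2 := rfl
      rw [show ((1:I):ℝ) = 1 from rfl]
      rw [ha] at hv
      linarith [hv]
    · show 1/2 + (1 - ((1:I):ℝ)) * v3 (q2 ((0:I), (0:I))) = (y.2.1 : ℝ)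
      have hv : v3 y = (y.2.1 : ℝ) - 1/2 := rfl
      rw [show ((1:I):ℝ) = 1 from rfl]
      rw [hb] at hv
      linarith [hv]
    · show 1/2 + (1 - ((1:I):ℝ)) * w3 (q2 ((0:I), (0:I))) = (y.2.2 : ℝ)
      have hv : w3 y = (y.2.2 : ℝ) - 1/2 := rfl
      rw [show ((1:I):ℝ) = 1 from rfl]
      rw [hc] at hv
      linarith [hv]
  · have hmne : m ≠ 0 := ne_of_gt h0
    set yb : I × I × I := (⟨1/2 + u3 y / (2*m), half_add_mem h0 (le_max_left _ _)⟩,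
        ⟨1/2 + v3 y / (2*m), half_add_mem h0 ((le_max_left _ _).trans (le_max_right _ _))⟩,
        ⟨1/2 + w3 y / (2*m), half_add_mem h0 ((le_max_right _ _).trans (le_max_right _ _))⟩)
      with hyb
    have e1 : u3 yb = u3 y / (2*m) := by
      show (1/2 + u3 y / (2*m)) - 1/2 = u3 y / (2*m); ring
    have e2 : v3 yb = v3 y / (2*m) := by
      show (1/2 + v3 y / (2*m)) - 1/2 = v3 y / (2*m); ring
    have e3 : w3 yb = w3 y / (2*m) := by
      show (1/2 + w3 y / (2*m)) - 1/2 = w3 y / (2*m); ring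
    have hybS : yb ∈ S3 := by
      rw [S3_iff, e1, e2, e3, abs_div, abs_div, abs_div, abs_of_pos (by linarith : (0:ℝ) < 2*m),
        max_div_div_right (by linarith : (0:ℝ) ≤ 2*m),
        max_div_div_right (by linarith : (0:ℝ) ≤ 2*m), ← hm]
      field_simp
    obtain ⟨z, hz⟩ := q2_surj hybS
    refine ⟨(⟨1 - 2*m, by constructor <;> linarith⟩, z), ?_⟩
    have hkey : ∀ x : ℝ, 2*m * (x / (2*m)) = x := fun x => by field_simp
    refine Prod.ext (Subtype.ext ?_) (Prod.ext (Subtype.ext ?_) (Subtype.ext ?_))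
    · show 1/2 + (1 - (1 - 2*m)) * u3 (q2 z) = (y.1 : ℝ)
      rw [hz, e1, show (1:ℝ) - (1 - 2*m) = 2*m by ring, hkey]
      have hv : u3 y = (y.1 : ℝ) - 1/2 := rfl
      linarith [hv]
    · show 1/2 + (1 - (1 - 2*m)) * v3 (q2 z) = (y.2.1 : ℝ)
      rw [hz, e2, show (1:ℝ) - (1 - 2*m) = 2*m by ring, hkey]
      have hv : v3 y = (y.2.1 : ℝ) - 1/2 := rfl
      linarith [hv]
    · show 1/2 + (1 - (1 - 2*m)) * w3 (q2 z) = (y.2.2 : ℝ)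
      rw [hz, e3, show (1:ℝ) - (1 - 2*m) = 2*m by ring, hkey]
      have hv : w3 y = (y.2.2 : ℝ) - 1/2 := rfl
      linarith [hv]

lemma max_abs_mul' (c x y : ℝ) (hc : 0 ≤ c) (hy : 0 ≤ y) :
    max |c * x| (c * y) = c * max |x| y := by
  rw [abs_mul, abs_of_nonneg hc, mul_comm c |x|, mul_comm c y,
    ← max_mul_of_nonneg _ _ hc, mul_comm]

lemma cone3_fiber {p p' : I × I × I} (h : cone3 p = cone3 p') :
    p.1 = p'.1 ∧ ((p.1 : ℝ) = 1 ∨ q2 p.2 = q2 p'.2) := by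
  have h1 : (1 - (p.1:ℝ)) * u3 (q2 p.2) = (1 - (p'.1:ℝ)) * u3 (q2 p'.2) := by
    have hq := Subtype.ext_iff.1 (congrArg Prod.fst h)
    simp only [cone3] at hq
    linarith [hq]
  have h2 : (1 - (p.1:ℝ)) * v3 (q2 p.2) = (1 - (p'.1:ℝ)) * v3 (q2 p'.2) := by
    have hq := Subtype.ext_iff.1 (congrArg (fun w : I × I × I => w.2.1) h)
    simp only [cone3] at hq
    linarith [hq]
  have h3 : (1 - (p.1:ℝ)) * w3 (q2 p.2) = (1 - (p'.1:ℝ)) * w3 (q2 p'.2) := by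
    have hq := Subtype.ext_iff.1 (congrArg (fun w : I × I × I => w.2.2) h)
    simp only [cone3] at hq
    linarith [hq]
  have hq := S3_iff.1 (q2_mem p.2)
  have hq' := S3_iff.1 (q2_mem p'.2)
  have hnn : (0:ℝ) ≤ 1 - (p.1:ℝ) := by linarith [(I_bounds p.1).2]
  have hnn' : (0:ℝ) ≤ 1 - (p'.1:ℝ) := by linarith [(I_bounds p'.1).2]
  have hE : (1 - (p.1:ℝ)) * (1/2) = (1 - (p'.1:ℝ)) * (1/2) := by
    have hmm := congrArg₂ max (congrArg abs h1)
      (congrArg₂ max (congrArg abs h2) (congrArg abs h3))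
    rw [max_abs_mul _ _ _ hnn, max_abs_mul _ _ _ hnn',
      max_abs_mul' _ _ _ hnn (le_trans (abs_nonneg _) (le_max_left _ _)),
      max_abs_mul' _ _ _ hnn' (le_trans (abs_nonneg _) (le_max_left _ _)), hq, hq'] at hmm
    exact hmm
  have hu : (p.1:ℝ) = (p'.1:ℝ) := by linarith
  refine ⟨Subtype.ext hu, ?_⟩
  rcases eq_or_ne ((p.1:ℝ)) 1 with h1' | h1'
  · exact Or.inl h1'
  · right
    have hne : (1 - (p.1:ℝ)) ≠ 0 := fun hcon => h1' (by linarith)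
    rw [← hu] at h1 h2 h3
    have ea := mul_left_cancel₀ hne h1
    have eb := mul_left_cancel₀ hne h2
    have ec := mul_left_cancel₀ hne h3
    refine Prod.ext (Subtype.ext ?_) (Prod.ext (Subtype.ext ?_) (Subtype.ext ?_))
    · have d1 : u3 (q2 p.2) = ((q2 p.2).1 : ℝ) - 1/2 := rfl
      have d2 : u3 (q2 p'.2) = ((q2 p'.2).1 : ℝ) - 1/2 := rfl
      rw [d1, d2] at ea; linarith
    · have d1 : v3 (q2 p.2) = ((q2 p.2).2.1 : ℝ) - 1/2 := rfl
      have d2 : v3 (q2 p'.2) = ((q2 p'.2).2.1 : ℝ) - 1/2 := rfl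
      rw [d1, d2] at eb; linarith
    · have d1 : w3 (q2 p.2) = ((q2 p.2).2.2 : ℝ) - 1/2 := rfl
      have d2 : w3 (q2 p'.2) = ((q2 p'.2).2.2 : ℝ) - 1/2 := rfl
      rw [d1, d2] at ec; linarith

/-! ### the 3-dimensional extension theorem -/

open scoped Topology.Homotopy in
theorem extend3 {M : Type*} [TopologicalSpace M]
    (hpi2 : ∀ x : M, Subsingleton (HomotopyGroup (Fin 2) M x)) (F : C(↥S3, M)) :
    ∃ E : C(I × I × I, M), ∀ y (hy : y ∈ S3), E y = F ⟨y, hy⟩ := by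
  classical
  set z0 : I × I := ((0:I), (0:I)) with hz0
  set x2 := F ⟨q2 z0, q2_mem z0⟩ with hx2
  -- pairing I × I with (Fin 2 → I)
  set j : I × I → (Fin 2 → I) := fun z i => if i = 0 then z.1 else z.2 with hj
  have hj0 : ∀ z, j z 0 = z.1 := fun z => rfl
  have hj1 : ∀ z, j z 1 = z.2 := fun z => rfl
  have hjcont : Continuous j := by
    apply continuous_pi
    intro i
    by_cases hi : i = 0
    · subst hi; exact continuous_fst
    · show Continuous fun z : I × I => if i = 0 then z.1 else z.2
      simp only [if_neg hi]; exact continuous_snd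
  have hjbd : ∀ z : I × I, z ∈ S2 → j z ∈ Cube.boundary (Fin 2) := by
    rintro z (h | h | h | h)
    · exact ⟨0, Or.inl h⟩
    · exact ⟨0, Or.inr h⟩
    · exact ⟨1, Or.inl h⟩
    · exact ⟨1, Or.inr h⟩
  -- the generalized loop associated to F
  set φ : C((Fin 2 → I), M) :=
    ⟨fun y => F ⟨q2 (y 0, y 1), q2_mem _⟩,
     F.continuous.comp (Continuous.subtype_mk (cont_q2.comp
       ((continuous_apply 0).prodMk (continuous_apply 1))) _)⟩ with hφ
  have hφbd : ∀ y ∈ Cube.boundary (Fin 2), φ y = x2 := by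
    rintro y ⟨i, hi⟩
    have hyS : (y 0, y 1) ∈ S2 := by
      fin_cases i
      · rcases hi with h | h
        · exact Or.inl h
        · exact Or.inr (Or.inl h)
      · rcases hi with h | h
        · exact Or.inr (Or.inr (Or.inl h))
        · exact Or.inr (Or.inr (Or.inr h))
    show F ⟨q2 (y 0, y 1), _⟩ = x2
    exact congrArg F (Subtype.ext (q2_boundary hyS))
  set p : ↥(GenLoop (Fin 2) M x2) := ⟨φ, hφbd⟩ with hp
  have hhom : GenLoop.Homotopic p GenLoop.const := by
    have hss := hpi2 x2
    exact Quotient.exact (@Subsingleton.elim (HomotopyGroup (Fin 2) M x2) hss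
      (Quotient.mk (GenLoop.Homotopic.setoid (Fin 2) x2) p)
      (Quotient.mk (GenLoop.Homotopic.setoid (Fin 2) x2) GenLoop.const))
  obtain ⟨H⟩ := hhom
  -- H : HomotopyRel φ const (Cube.boundary (Fin 2))
  set K : I × I × I → M := fun q => H (q.1, j q.2) with hK
  have hKc : Continuous K :=
    H.continuous.comp (continuous_fst.prodMk (hjcont.comp continuous_snd))
  have hK0 : ∀ z : I × I, K (0, z) = F ⟨q2 z, q2_mem z⟩ := by
    intro z
    show H (0, j z) = _
    rw [H.apply_zero]
    show F ⟨q2 (j z 0, j z 1), _⟩ = F ⟨q2 z, q2_mem z⟩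
    exact congrArg F (Subtype.ext (congrArg q2 (Prod.ext (hj0 z) (hj1 z))))
  have hKS2 : ∀ (u : I) (z : I × I), z ∈ S2 → K (u, z) = F ⟨q2 z, q2_mem z⟩ := by
    intro u z hz
    show H (u, j z) = _
    rw [H.eq_fst u (hjbd z hz)]
    show F ⟨q2 (j z 0, j z 1), _⟩ = F ⟨q2 z, q2_mem z⟩
    exact congrArg F (Subtype.ext (congrArg q2 (Prod.ext (hj0 z) (hj1 z))))
  obtain ⟨E, hEc, hEQ⟩ := descend cont_cone3 cone3_surj hKc
    (fun p₁ p₂ hpp => by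
      obtain ⟨hu, hrest⟩ := cone3_fiber hpp
      rcases hrest with hcase | hcase
      · have hp1 : p₁.1 = 1 := I_eq_one_iff.2 hcase
        have hp1' : p₂.1 = 1 := hu ▸ hp1
        show H (p₁.1, j p₁.2) = H (p₂.1, j p₂.2)
        rw [hp1, hp1', H.apply_one, H.apply_one]
        rfl
      · rcases q2_fiber hcase with h2 | ⟨h2, h2'⟩
        · rw [show p₁ = p₂ from Prod.ext hu h2]
        · show K (p₁.1, p₁.2) = K (p₂.1, p₂.2)
          rw [hKS2 p₁.1 p₁.2 h2, hKS2 p₂.1 p₂.2 h2']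
          exact congrArg F (Subtype.ext ((q2_boundary h2).trans (q2_boundary h2').symm)))
  refine ⟨⟨E, hEc⟩, fun y hy => ?_⟩
  obtain ⟨z, hzq⟩ := q2_surj hy
  have hQ : cone3 (0, z) = y := by
    refine Prod.ext (Subtype.ext ?_) (Prod.ext (Subtype.ext ?_) (Subtype.ext ?_))
    · show 1/2 + (1 - ((0:I):ℝ)) * u3 (q2 z) = (y.1 : ℝ)
      rw [hzq, show ((0:I):ℝ) = 0 from rfl]
      have hv : u3 y = (y.1 : ℝ) - 1/2 := rfl
      rw [hv]; ring
    · show 1/2 + (1 - ((0:I):ℝ)) * v3 (q2 z) = (y.2.1 : ℝ)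
      rw [hzq, show ((0:I):ℝ) = 0 from rfl]
      have hv : v3 y = (y.2.1 : ℝ) - 1/2 := rfl
      rw [hv]; ring
    · show 1/2 + (1 - ((0:I):ℝ)) * w3 (q2 z) = (y.2.2 : ℝ)
      rw [hzq, show ((0:I):ℝ) = 0 from rfl]
      have hv : w3 y = (y.2.2 : ℝ) - 1/2 := rfl
      rw [hv]; ring
  have h3 := hEQ (0, z)
  rw [hQ] at h3
  show E y = F ⟨y, hy⟩
  rw [h3, hK0 z]
  exact congrArg F (Subtype.ext hzq)

/-! ### piecewise boundary data on the square -/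

section F2
variable {M : Type*} [TopologicalSpace M]

open Classical in
/-- boundary data on the square: `Bo` at `t = 0`, `To` at `t = 1` (functions of `s`),
`Le` at `s = 0`, `Ri` at `s = 1` (functions of `t`); here `z = (s, t)`. -/
noncomputable def F2fun (Bo To Le Ri : C(I, M)) : ↥S2 → M := fun z =>
  if z.1.2 = 0 then Bo z.1.1
  else if z.1.2 = 1 then To z.1.1
  else if z.1.1 = 0 then Le z.1.2
  else Ri z.1.2

variable {Bo To Le Ri : C(I, M)}
variable (hBL : Bo 0 = Le 0) (hBR : Bo 1 = Ri 0) (hTL : To 0 = Le 1) (hTR : To 1 = Ri 1)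

lemma F2fun_t0 (z : ↥S2) (h : z.1.2 = 0) : F2fun Bo To Le Ri z = Bo z.1.1 := by
  unfold F2fun; rw [if_pos h]

lemma F2fun_t1 (z : ↥S2) (h : z.1.2 = 1) : F2fun Bo To Le Ri z = To z.1.1 := by
  unfold F2fun
  rw [if_neg (by rw [h]; exact (zero_ne_one (α := I)).symm), if_pos h]

include hBL hTL in
lemma F2fun_s0 (z : ↥S2) (h : z.1.1 = 0) : F2fun Bo To Le Ri z = Le z.1.2 := by
  unfold F2fun
  by_cases h0 : z.1.2 = 0
  · rw [if_pos h0, h, h0, hBL]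
  · by_cases h1 : z.1.2 = 1
    · rw [if_neg h0, if_pos h1, h, h1, hTL]
    · rw [if_neg h0, if_neg h1, if_pos h]

include hBR hTR in
lemma F2fun_s1 (z : ↥S2) (h : z.1.1 = 1) : F2fun Bo To Le Ri z = Ri z.1.2 := by
  unfold F2fun
  by_cases h0 : z.1.2 = 0
  · rw [if_pos h0, h, h0, hBR]
  · by_cases h1 : z.1.2 = 1
    · rw [if_neg h0, if_pos h1, h, h1, hTR]
    · rw [if_neg h0, if_neg h1, if_neg (by rw [h]; exact (zero_ne_one (α := I)).symm)]

include hBL hBR hTL hTR in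
lemma F2fun_continuous : Continuous (F2fun Bo To Le Ri) := by
  have c1 : Continuous fun z : ↥S2 => z.1.1 := continuous_fst.comp continuous_subtype_val
  have c2 : Continuous fun z : ↥S2 => z.1.2 := continuous_snd.comp continuous_subtype_val
  apply continuous_of_closed_cover (ι := Fin 4)
    (s := ![{z : ↥S2 | z.1.2 = 0}, {z : ↥S2 | z.1.2 = 1},
            {z : ↥S2 | z.1.1 = 0}, {z : ↥S2 | z.1.1 = 1}])
  · intro i
    fin_cases i
    · exact isClosed_singleton.preimage c2
    · exact isClosed_singleton.preimage c2
    · exact isClosed_singleton.preimage c1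
    · exact isClosed_singleton.preimage c1
  · intro z
    rcases z.2 with h | h | h | h
    · exact ⟨2, h⟩
    · exact ⟨3, h⟩
    · exact ⟨0, h⟩
    · exact ⟨1, h⟩
  · intro i
    fin_cases i
    · exact ContinuousOn.congr (Continuous.continuousOn (Bo.continuous.comp c1))
        (fun z hz => F2fun_t0 z hz)
    · exact ContinuousOn.congr (Continuous.continuousOn (To.continuous.comp c1))
        (fun z hz => F2fun_t1 z hz)
    · exact ContinuousOn.congr (Continuous.continuousOn (Le.continuous.comp c2))
        (fun z hz => F2fun_s0 hBL hTL z hz)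
    · exact ContinuousOn.congr (Continuous.continuousOn (Ri.continuous.comp c2))
        (fun z hz => F2fun_s1 hBR hTR z hz)

end F2

/-! ### piecewise boundary data on the cube; coordinates `(u, s, t)` -/

section F3
variable {M : Type*} [TopologicalSpace M]

open Classical in
/-- boundary data on the cube `(u, s, t)`: `g` at `t = 0` and `fg` at `t = 1`
(functions of `(u, s)`); `P0` at `s = 0` and `P1` at `s = 1` (functions of `t`);
`A` at `u = 0` and `B` at `u = 1` (functions of `(s, t)`). -/
noncomputable def F3fun (g fg : C(I × I, M)) (P0 P1 : C(I, M)) (A B : C(I × I, M)) :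
    ↥S3 → M := fun z =>
  if z.1.2.2 = 0 then g (z.1.1, z.1.2.1)
  else if z.1.2.2 = 1 then fg (z.1.1, z.1.2.1)
  else if z.1.2.1 = 0 then P0 z.1.2.2
  else if z.1.2.1 = 1 then P1 z.1.2.2
  else if z.1.1 = 0 then A (z.1.2.1, z.1.2.2)
  else B (z.1.2.1, z.1.2.2)

variable {g fg : C(I × I, M)} {P0 P1 : C(I, M)} {A B : C(I × I, M)}
variable (hg0 : ∀ u, g (u, 0) = P0 0) (hfg0 : ∀ u, fg (u, 0) = P0 1)
variable (hg1 : ∀ u, g (u, 1) = P1 0) (hfg1 : ∀ u, fg (u, 1) = P1 1)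
variable (hAt0 : ∀ s, A (s, 0) = g (0, s)) (hAt1 : ∀ s, A (s, 1) = fg (0, s))
variable (hAs0 : ∀ t, A (0, t) = P0 t) (hAs1 : ∀ t, A (1, t) = P1 t)
variable (hBt0 : ∀ s, B (s, 0) = g (1, s)) (hBt1 : ∀ s, B (s, 1) = fg (1, s))
variable (hBs0 : ∀ t, B (0, t) = P0 t) (hBs1 : ∀ t, B (1, t) = P1 t)

lemma F3fun_t0 (z : ↥S3) (h : z.1.2.2 = 0) :
    F3fun g fg P0 P1 A B z = g (z.1.1, z.1.2.1) := by
  unfold F3fun; rw [if_pos h]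

lemma F3fun_t1 (z : ↥S3) (h : z.1.2.2 = 1) :
    F3fun g fg P0 P1 A B z = fg (z.1.1, z.1.2.1) := by
  unfold F3fun
  rw [if_neg (by rw [h]; exact (zero_ne_one (α := I)).symm), if_pos h]

include hg0 hfg0 in
lemma F3fun_s0 (z : ↥S3) (h : z.1.2.1 = 0) : F3fun g fg P0 P1 A B z = P0 z.1.2.2 := by
  unfold F3fun
  by_cases h0 : z.1.2.2 = 0
  · rw [if_pos h0, h, h0, hg0]
  · by_cases h1 : z.1.2.2 = 1
    · rw [if_neg h0, if_pos h1, h, h1, hfg0]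
    · rw [if_neg h0, if_neg h1, if_pos h]

include hg1 hfg1 in
lemma F3fun_s1 (z : ↥S3) (h : z.1.2.1 = 1) : F3fun g fg P0 P1 A B z = P1 z.1.2.2 := by
  unfold F3fun
  by_cases h0 : z.1.2.2 = 0
  · rw [if_pos h0, h, h0, hg1]
  · by_cases h1 : z.1.2.2 = 1
    · rw [if_neg h0, if_pos h1, h, h1, hfg1]
    · rw [if_neg h0, if_neg h1,
        if_neg (by rw [h]; exact (zero_ne_one (α := I)).symm), if_pos h]

include hAt0 hAt1 hAs0 hAs1 in
lemma F3fun_u0 (z : ↥S3) (h : z.1.1 = 0) :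
    F3fun g fg P0 P1 A B z = A (z.1.2.1, z.1.2.2) := by
  unfold F3fun
  by_cases h0 : z.1.2.2 = 0
  · rw [if_pos h0, h, h0, hAt0]
  · by_cases h1 : z.1.2.2 = 1
    · rw [if_neg h0, if_pos h1, h, h1, hAt1]
    · by_cases hs0 : z.1.2.1 = 0
      · rw [if_neg h0, if_neg h1, if_pos hs0, hs0, hAs0]
      · by_cases hs1 : z.1.2.1 = 1
        · rw [if_neg h0, if_neg h1, if_neg hs0, if_pos hs1, hs1, hAs1]
        · rw [if_neg h0, if_neg h1, if_neg hs0, if_neg hs1, if_pos h]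

include hBt0 hBt1 hBs0 hBs1 in
lemma F3fun_u1 (z : ↥S3) (h : z.1.1 = 1) :
    F3fun g fg P0 P1 A B z = B (z.1.2.1, z.1.2.2) := by
  unfold F3fun
  by_cases h0 : z.1.2.2 = 0
  · rw [if_pos h0, h, h0, hBt0]
  · by_cases h1 : z.1.2.2 = 1
    · rw [if_neg h0, if_pos h1, h, h1, hBt1]
    · by_cases hs0 : z.1.2.1 = 0
      · rw [if_neg h0, if_neg h1, if_pos hs0, hs0, hBs0]
      · by_cases hs1 : z.1.2.1 = 1
        · rw [if_neg h0, if_neg h1, if_neg hs0, if_pos hs1, hs1, hBs1]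
        · rw [if_neg h0, if_neg h1, if_neg hs0, if_neg hs1,
            if_neg (by rw [h]; exact (zero_ne_one (α := I)).symm)]

include hg0 hfg0 hg1 hfg1 hAt0 hAt1 hAs0 hAs1 hBt0 hBt1 hBs0 hBs1 in
lemma F3fun_continuous : Continuous (F3fun g fg P0 P1 A B) := by
  have c1 : Continuous fun z : ↥S3 => z.1.1 := continuous_fst.comp continuous_subtype_val
  have c2 : Continuous fun z : ↥S3 => z.1.2.1 :=
    (continuous_fst.comp continuous_snd).comp continuous_subtype_val
  have c3 : Continuous fun z : ↥S3 => z.1.2.2 :=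
    (continuous_snd.comp continuous_snd).comp continuous_subtype_val
  apply continuous_of_closed_cover (ι := Fin 6)
    (s := ![{z : ↥S3 | z.1.2.2 = 0}, {z : ↥S3 | z.1.2.2 = 1},
            {z : ↥S3 | z.1.2.1 = 0}, {z : ↥S3 | z.1.2.1 = 1},
            {z : ↥S3 | z.1.1 = 0}, {z : ↥S3 | z.1.1 = 1}])
  · intro i
    fin_cases i
    · exact isClosed_singleton.preimage c3
    · exact isClosed_singleton.preimage c3
    · exact isClosed_singleton.preimage c2
    · exact isClosed_singleton.preimage c2
    · exact isClosed_singleton.preimage c1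
    · exact isClosed_singleton.preimage c1
  · intro z
    rcases z.2 with h | h | h | h | h | h
    · exact ⟨4, h⟩
    · exact ⟨5, h⟩
    · exact ⟨2, h⟩
    · exact ⟨3, h⟩
    · exact ⟨0, h⟩
    · exact ⟨1, h⟩
  · intro i
    fin_cases i
    · exact ContinuousOn.congr (Continuous.continuousOn
        (g.continuous.comp (c1.prodMk c2))) (fun z hz => F3fun_t0 z hz)
    · exact ContinuousOn.congr (Continuous.continuousOn
        (fg.continuous.comp (c1.prodMk c2))) (fun z hz => F3fun_t1 z hz)
    · exact ContinuousOn.congr (Continuous.continuousOn (P0.continuous.comp c3))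
        (fun z hz => F3fun_s0 hg0 hfg0 z hz)
    · exact ContinuousOn.congr (Continuous.continuousOn (P1.continuous.comp c3))
        (fun z hz => F3fun_s1 hg1 hfg1 z hz)
    · exact ContinuousOn.congr (Continuous.continuousOn
        (A.continuous.comp (c2.prodMk c3))) (fun z hz => F3fun_u0 hAt0 hAt1 hAs0 hAs1 z hz)
    · exact ContinuousOn.congr (Continuous.continuousOn
        (B.continuous.comp (c2.prodMk c3))) (fun z hz => F3fun_u1 hBt0 hBt1 hBs0 hBs1 z hz)

end F3

/-! ### application to the twisted path space -/

section Main

variable {M : Type*} [TopologicalSpace M] [SimplyConnectedSpace M] (f : C(M, M))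

theorem joined_pathspace (γ₀ γ₁ : {γ : C(I, M) // γ 1 = f (γ 0)}) : Joined γ₀ γ₁ := by
  set pb : Path (γ₀.1 0) (γ₁.1 0) := PathConnectedSpace.somePath _ _ with hpb
  set Bo : C(I, M) := pb.toContinuousMap with hBo
  set To : C(I, M) := f.comp pb.toContinuousMap with hTo
  have hBL : Bo 0 = γ₀.1 0 := pb.source
  have hBR : Bo 1 = γ₁.1 0 := pb.target
  have hTL : To 0 = γ₀.1 1 := by
    show f (pb 0) = γ₀.1 1
    rw [pb.source]; exact γ₀.2.symm
  have hTR : To 1 = γ₁.1 1 := by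
    show f (pb 1) = γ₁.1 1
    rw [pb.target]; exact γ₁.2.symm
  obtain ⟨E, hE⟩ := extend2 (⟨F2fun Bo To γ₀.1 γ₁.1,
    F2fun_continuous hBL hBR hTL hTR⟩ : C(↥S2, M))
  have hEt0 : ∀ s : I, E (s, 0) = Bo s := fun s => by
    have hmem : ((s, (0:I)) : I × I) ∈ S2 := Or.inr (Or.inr (Or.inl rfl))
    rw [hE _ hmem]
    exact F2fun_t0 _ rfl
  have hEt1 : ∀ s : I, E (s, 1) = To s := fun s => by
    have hmem : ((s, (1:I)) : I × I) ∈ S2 := Or.inr (Or.inr (Or.inr rfl))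
    rw [hE _ hmem]
    exact F2fun_t1 _ rfl
  have hEs0 : ∀ t : I, E (0, t) = γ₀.1 t := fun t => by
    have hmem : (((0:I), t) : I × I) ∈ S2 := Or.inl rfl
    rw [hE _ hmem]
    exact F2fun_s0 hBL hTL _ rfl
  have hEs1 : ∀ t : I, E (1, t) = γ₁.1 t := fun t => by
    have hmem : (((1:I), t) : I × I) ∈ S2 := Or.inr (Or.inl rfl)
    rw [hE _ hmem]
    exact F2fun_s1 hBR hTR _ rfl
  refine ⟨⟨⟨fun s => ⟨E.curry s, ?_⟩, ?_⟩, ?_, ?_⟩⟩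
  · show E (s, 1) = f (E (s, 0))
    rw [hEt1, hEt0]
    rfl
  · exact Continuous.subtype_mk E.curry.continuous _
  · exact Subtype.ext (ContinuousMap.ext fun t => hEs0 t)
  · exact Subtype.ext (ContinuousMap.ext fun t => hEs1 t)

theorem homotopic_pathspace (hpi2 : ∀ x : M, Subsingleton (HomotopyGroup (Fin 2) M x))
    {γ₀ γ₁ : {γ : C(I, M) // γ 1 = f (γ 0)}} (α β : Path γ₀ γ₁) : α.Homotopic β := by
  have hcα : Continuous fun s : I => ((α s).1 : C(I, M)) 0 :=
    (continuous_eval_const (0:I)).comp (continuous_subtype_val.comp α.continuous)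
  have hcβ : Continuous fun s : I => ((β s).1 : C(I, M)) 0 :=
    (continuous_eval_const (0:I)).comp (continuous_subtype_val.comp β.continuous)
  set α₀ : Path (γ₀.1 0) (γ₁.1 0) :=
    ⟨⟨fun s => (α s).1 0, hcα⟩, by show (α 0).1 0 = γ₀.1 0; rw [α.source],
      by show (α 1).1 0 = γ₁.1 0; rw [α.target]⟩ with hα₀
  set β₀ : Path (γ₀.1 0) (γ₁.1 0) :=
    ⟨⟨fun s => (β s).1 0, hcβ⟩, by show (β 0).1 0 = γ₀.1 0; rw [β.source],
      by show (β 1).1 0 = γ₁.1 0; rw [β.target]⟩ with hβ₀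
  obtain ⟨g⟩ := SimplyConnectedSpace.paths_homotopic α₀ β₀
  set gm : C(I × I, M) := g.toHomotopy.toContinuousMap with hgm
  set fgm : C(I × I, M) := f.comp gm with hfgm
  have hAc : Continuous fun q : I × I => ((α q.1).1 : C(I, M)) q.2 :=
    continuous_eval.comp
      ((continuous_subtype_val.comp (α.continuous.comp continuous_fst)).prodMk continuous_snd)
  have hBc : Continuous fun q : I × I => ((β q.1).1 : C(I, M)) q.2 :=
    continuous_eval.comp
      ((continuous_subtype_val.comp (β.continuous.comp continuous_fst)).prodMk continuous_snd)
  set Am : C(I × I, M) := ⟨fun q => (α q.1).1 q.2, hAc⟩ with hAm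
  set Bm : C(I × I, M) := ⟨fun q => (β q.1).1 q.2, hBc⟩ with hBm
  have hg0 : ∀ u, gm (u, 0) = γ₀.1 0 := fun u => g.source u
  have hg1 : ∀ u, gm (u, 1) = γ₁.1 0 := fun u => g.target u
  have hfg0 : ∀ u, fgm (u, 0) = γ₀.1 1 := fun u => by
    show f (gm (u, 0)) = γ₀.1 1
    rw [hg0]; exact γ₀.2.symm
  have hfg1 : ∀ u, fgm (u, 1) = γ₁.1 1 := fun u => by
    show f (gm (u, 1)) = γ₁.1 1
    rw [hg1]; exact γ₁.2.symm
  have hAt0 : ∀ s, Am (s, 0) = gm (0, s) := fun s => (g.apply_zero s).symm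
  have hBt0 : ∀ s, Bm (s, 0) = gm (1, s) := fun s => (g.apply_one s).symm
  have hAt1 : ∀ s, Am (s, 1) = fgm (0, s) := fun s => by
    show (α s).1 1 = f (gm (0, s))
    rw [(α s).2]
    exact congrArg f (g.apply_zero s).symm
  have hBt1 : ∀ s, Bm (s, 1) = fgm (1, s) := fun s => by
    show (β s).1 1 = f (gm (1, s))
    rw [(β s).2]
    exact congrArg f (g.apply_one s).symm
  have hAs0 : ∀ t, Am (0, t) = γ₀.1 t := fun t => by
    show (α 0).1 t = γ₀.1 t; rw [α.source]
  have hAs1 : ∀ t, Am (1, t) = γ₁.1 t := fun t => by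
    show (α 1).1 t = γ₁.1 t; rw [α.target]
  have hBs0 : ∀ t, Bm (0, t) = γ₀.1 t := fun t => by
    show (β 0).1 t = γ₀.1 t; rw [β.source]
  have hBs1 : ∀ t, Bm (1, t) = γ₁.1 t := fun t => by
    show (β 1).1 t = γ₁.1 t; rw [β.target]
  obtain ⟨E, hE⟩ := extend3 hpi2 (⟨F3fun gm fgm γ₀.1 γ₁.1 Am Bm,
    F3fun_continuous hg0 hfg0 hg1 hfg1 hAt0 hAt1 hAs0 hAs1 hBt0 hBt1 hBs0 hBs1⟩ : C(↥S3, M))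
  have hft0 : ∀ u s : I, E (u, s, 0) = gm (u, s) := fun u s => by
    have hmem : ((u, s, (0:I)) : I × I × I) ∈ S3 :=
      Or.inr (Or.inr (Or.inr (Or.inr (Or.inl rfl))))
    rw [hE _ hmem]
    exact F3fun_t0 _ rfl
  have hft1 : ∀ u s : I, E (u, s, 1) = fgm (u, s) := fun u s => by
    have hmem : ((u, s, (1:I)) : I × I × I) ∈ S3 :=
      Or.inr (Or.inr (Or.inr (Or.inr (Or.inr rfl))))
    rw [hE _ hmem]
    exact F3fun_t1 _ rfl
  have hfs0 : ∀ u t : I, E (u, 0, t) = γ₀.1 t := fun u t => by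
    have hmem : ((u, (0:I), t) : I × I × I) ∈ S3 := Or.inr (Or.inr (Or.inl rfl))
    rw [hE _ hmem]
    exact F3fun_s0 hg0 hfg0 _ rfl
  have hfs1 : ∀ u t : I, E (u, 1, t) = γ₁.1 t := fun u t => by
    have hmem : ((u, (1:I), t) : I × I × I) ∈ S3 := Or.inr (Or.inr (Or.inr (Or.inl rfl)))
    rw [hE _ hmem]
    exact F3fun_s1 hg1 hfg1 _ rfl
  have hfu0 : ∀ s t : I, E (0, s, t) = (α s).1 t := fun s t => by
    have hmem : (((0:I), s, t) : I × I × I) ∈ S3 := Or.inl rfl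
    rw [hE _ hmem]
    exact F3fun_u0 hAt0 hAt1 hAs0 hAs1 _ rfl
  have hfu1 : ∀ s t : I, E (1, s, t) = (β s).1 t := fun s t => by
    have hmem : (((1:I), s, t) : I × I × I) ∈ S3 := Or.inr (Or.inl rfl)
    rw [hE _ hmem]
    exact F3fun_u1 hBt0 hBt1 hBs0 hBs1 _ rfl
  set E' : C((I × I) × I, M) := E.comp (Homeomorph.prodAssoc I I I : C((I × I) × I, I × I × I)) with hE'
  refine ⟨⟨⟨⟨fun q => ⟨E'.curry q, ?_⟩, ?_⟩, ?_, ?_⟩, ?_⟩⟩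
  · show E (q.1, q.2, 1) = f (E (q.1, q.2, 0))
    rw [hft1, hft0]
    rfl
  · exact Continuous.subtype_mk E'.curry.continuous _
  · intro s
    exact Subtype.ext (ContinuousMap.ext fun t => hfu0 s t)
  · intro s
    exact Subtype.ext (ContinuousMap.ext fun t => hfu1 s t)
  · intro u s hs
    simp only [Set.mem_insert_iff, Set.mem_singleton_iff] at hs
    rcases hs with rfl | rfl
    · refine Subtype.ext (ContinuousMap.ext fun t => ?_)
      show E (u, 0, t) = ((α 0).1 : C(I, M)) t
      rw [α.source]
      exact hfs0 u t
    · refine Subtype.ext (ContinuousMap.ext fun t => ?_)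
      show E (u, 1, t) = ((α 1).1 : C(I, M)) t
      rw [α.target]
      exact hfs1 u t

end Main

end StmtAux

attribute [local instance] Path.Homotopic.setoid

/-- If `M` is a closed 2-connected manifold and `f : M → M` is a
fixed-point-free continuous involution, then the twisted path space
`P_f M = {γ : C([0,1], M) | γ(1) = f(γ(0))}` is simply connected (in particular it is
path-connected with trivial fundamental group). -/
theorem stmt_0 {n : ℕ} {M : Type} [TopologicalSpace M] [T2Space M] [CompactSpace M]
    [ChartedSpace (EuclideanSpace ℝ (Fin n)) M]
    [SimplyConnectedSpace M]
    (hπ2 : ∀ x : M, Subsingleton (HomotopyGroup (Fin 2) M x))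
    (f : C(M, M)) (hf : ∀ x, f (f x) = x) (hfree : ∀ x, f x ≠ x) :
    SimplyConnectedSpace {γ : C(I, M) // γ 1 = f (γ 0)} ∧
    PathConnectedSpace {γ : C(I, M) // γ 1 = f (γ 0)} ∧
    ∀ γ : {γ : C(I, M) // γ 1 = f (γ 0)},
      Subsingleton (FundamentalGroup {γ : C(I, M) // γ 1 = f (γ 0)} γ) := by
  have hne : Nonempty {γ : C(I, M) // γ 1 = f (γ 0)} := by
    obtain ⟨x0⟩ := (inferInstance : PathConnectedSpace M).nonempty
    refine ⟨⟨(PathConnectedSpace.somePath x0 (f x0)).toContinuousMap, ?_⟩⟩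
    show (PathConnectedSpace.somePath x0 (f x0)) 1 = f ((PathConnectedSpace.somePath x0 (f x0)) 0)
    rw [Path.target, Path.source]
  have hpc : PathConnectedSpace {γ : C(I, M) // γ 1 = f (γ 0)} :=
    ⟨hne, StmtAux.joined_pathspace f⟩
  have hsub : ∀ x y : {γ : C(I, M) // γ 1 = f (γ 0)},
      Subsingleton (Path.Homotopic.Quotient x y) := by
    intro x y
    constructor
    intro a b
    refine Quotient.inductionOn₂ a b fun p q => Quotient.sound ?_
    exact StmtAux.homotopic_pathspace f hπ2 p q
  have hsc : SimplyConnectedSpace {γ : C(I, M) // γ 1 = f (γ 0)} :=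
    simply_connected_iff_paths_homotopic.2 ⟨hpc, hsub⟩
  refine ⟨hsc, hpc, ?_⟩
  intro γ
  constructor
  intro a b
  haveI := hsc
  have hinst : Subsingleton ((⟨γ⟩ : FundamentalGroupoid {γ : C(I, M) // γ 1 = f (γ 0)}) ⟶ ⟨γ⟩) :=
    inferInstanceAs (Subsingleton (Path.Homotopic.Quotient γ γ))
  exact @Subsingleton.elim _ hinst a b
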